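/- arXiv:2309.03500 — 2 statements merged into one kernel-verified Lean document; each statement's English description precedes it below -/
import Mathlib

section
/- Suppose each S_{a^n} reproduces Π₀. Let r : [−1,1] → ℝ be C¹ and set R(t) = ∫_{t}^{1} r(s) ds. Assume there exist α > 2 and μ > 0 such that for all n and all j = 1−n,…,L_n, a^{n,0}_j − a^{n,1}_{j+1} = r(j/n)·n^{−2} + ε^n_j with |ε^n_j| ≤ μ·n^{−α}, and assume ∫_{−1}^{1} |R(t)| dt < 1. Then there exists n₀ ∈ ℕ such that ∑_{j=1−n}^{L_n} |q^{n,1}_j| < 1 for all n ≥ n₀. -/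
/-- `‖q^{n,1}‖₁ = ∑_{j=1−n}^{L_n} |q^{n,1}_j|`, where
`q^{n,1}_j = ∑_{l=j}^{L_n} (a^{n,0}_l − a^{n,1}_{l+1})`. -/
noncomputable def qsum1 (a0 a1 : ℤ → ℝ) (nn Ln : ℤ) : ℝ :=
  ∑ j ∈ Finset.Icc (1 - nn) Ln, |∑ l ∈ Finset.Icc j Ln, (a0 l - a1 (l + 1))|

open MeasureTheory intervalIntegral

lemma tele_sum (f : ℤ → ℝ) (a : ℤ) : ∀ b : ℤ, a - 1 ≤ b →
    ∑ l ∈ Finset.Icc a b, (f l - f (l + 1)) = f a - f (b + 1) := by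
  refine Int.le_induction ?_ ?_
  · rw [Finset.Icc_eq_empty (by omega)]
    simp [show a - 1 + 1 = a by ring]
  · intro b hb ih
    have hins : Finset.Icc a (b + 1) = insert (b + 1) (Finset.Icc a b) := by
      ext x; simp only [Finset.mem_Icc, Finset.mem_insert]; omega
    rw [hins, Finset.sum_insert (by simp only [Finset.mem_Icc]; omega), ih]
    ring

lemma stmt17_aux
    (a0 a1 : ℤ → ℝ) (Ln : ℤ) (n : ℕ) (hn : 1 ≤ n)
    (hLn1 : (n : ℤ) - 1 ≤ Ln) (hLn2 : Ln ≤ (n : ℤ))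
    (r : ℝ → ℝ) (hrc : ContinuousOn r (Set.Icc (-1 : ℝ) 1))
    (M K : ℝ) (hM0 : 0 ≤ M) (hK0 : 0 ≤ K)
    (hM : ∀ t ∈ Set.Icc (-1 : ℝ) 1, |r t| ≤ M)
    (hlip : ∀ s ∈ Set.Icc (-1 : ℝ) 1, ∀ t ∈ Set.Icc (-1 : ℝ) 1, |r s - r t| ≤ K * |s - t|)
    (α μ : ℝ) (hα : 2 < α) (hμ : 0 < μ)
    (herr : ∀ j : ℤ, 1 - (n : ℤ) ≤ j → j ≤ Ln →
      |a0 j - a1 (j + 1) - r ((j : ℝ) / n) / (n : ℝ) ^ 2| ≤ μ / (n : ℝ) ^ α)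
    (hcase : Ln = (n : ℤ) - 1 ∨ Ln = (n : ℤ)) :
    qsum1 a0 a1 n Ln ≤ (∫ t in (-1 : ℝ)..1, |∫ s in t..(1 : ℝ), r s|)
      + (4 * M + 4 * K) / n + 6 * μ * (n : ℝ) ^ ((2 : ℝ) - α) := by
  have hN1 : (1 : ℝ) ≤ (n : ℝ) := by exact_mod_cast hn
  have hNpos : (0 : ℝ) < (n : ℝ) := by linarith
  have hNne : (n : ℝ) ≠ 0 := ne_of_gt hNpos
  have hαpos : (0 : ℝ) < (n : ℝ) ^ α := Real.rpow_pos_of_pos hNpos α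
  have hmem : ∀ x : ℝ, -(n : ℝ) ≤ x → x ≤ (n : ℝ) → x / n ∈ Set.Icc (-1 : ℝ) 1 := by
    intro x h1 h2
    constructor
    · rw [le_div_iff₀ hNpos]; linarith
    · rw [div_le_one hNpos]; linarith
  have hmemz : ∀ l : ℤ, -(n : ℤ) ≤ l → l ≤ (n : ℤ) → (l : ℝ) / n ∈ Set.Icc (-1 : ℝ) 1 := by
    intro l h1 h2
    apply hmem
    · exact_mod_cast h1
    · exact_mod_cast h2
  have hint : ∀ a b : ℝ, a ∈ Set.Icc (-1 : ℝ) 1 → b ∈ Set.Icc (-1 : ℝ) 1 →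
      IntervalIntegrable r volume a b :=
    fun a b ha hb => (hrc.mono (Set.uIcc_subset_Icc ha hb)).intervalIntegrable
  set F : ℝ → ℝ := fun t => ∫ s in t..(1 : ℝ), r s with hFdef
  have h1mem : (1 : ℝ) ∈ Set.Icc (-1 : ℝ) 1 := by constructor <;> norm_num
  have hFsub : ∀ a ∈ Set.Icc (-1 : ℝ) 1, ∀ b ∈ Set.Icc (-1 : ℝ) 1,
      F a - F b = ∫ s in a..b, r s := by
    intro a ha b hb
    have h := integral_add_adjacent_intervals (hint a b ha hb) (hint b 1 hb h1mem)
    simp only [hFdef]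
    linarith
  have hF1 : F 1 = 0 := integral_same
  have hFlip : ∀ a ∈ Set.Icc (-1 : ℝ) 1, ∀ b ∈ Set.Icc (-1 : ℝ) 1,
      |F a - F b| ≤ M * |b - a| := by
    intro a ha b hb
    rw [hFsub a ha b hb]
    have h := intervalIntegral.norm_integral_le_of_norm_le_const (C := M) (f := r)
      (a := a) (b := b) ?_
    · simpa [Real.norm_eq_abs] using h
    · intro x hx
      have hx' : x ∈ Set.Icc (-1 : ℝ) 1 :=
        Set.uIcc_subset_Icc ha hb (Set.uIoc_subset_uIcc hx)
      simpa [Real.norm_eq_abs] using hM x hx'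
  have hFcont : ContinuousOn F (Set.Icc (-1 : ℝ) 1) := by
    have hl : LipschitzOnWith (Real.toNNReal M) F (Set.Icc (-1 : ℝ) 1) := by
      apply LipschitzOnWith.of_dist_le'
      intro x hx y hy
      rw [Real.dist_eq, Real.dist_eq]
      calc |F x - F y| ≤ M * |y - x| := hFlip x hx y hy
        _ = M * |x - y| := by rw [abs_sub_comm]
    exact hl.continuousOn
  have hintF : ∀ a b : ℝ, a ∈ Set.Icc (-1 : ℝ) 1 → b ∈ Set.Icc (-1 : ℝ) 1 →
      IntervalIntegrable (fun t => |F t|) volume a b :=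
    fun a b ha hb => ((hFcont.abs).mono (Set.uIcc_subset_Icc ha hb)).intervalIntegrable
  -- step estimate
  have hstep : ∀ l : ℤ, 1 - (n : ℤ) ≤ l → l ≤ (n : ℤ) - 1 →
      |(F ((l : ℝ) / n) - F (((l : ℝ) + 1) / n)) - r ((l : ℝ) / n) / n| ≤ K / (n : ℝ) ^ 2 := by
    intro l hl1 hl2
    have hm1 : (l : ℝ) / n ∈ Set.Icc (-1 : ℝ) 1 := hmemz l (by omega) (by omega)
    have hm2 : ((l : ℝ) + 1) / n ∈ Set.Icc (-1 : ℝ) 1 := by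
      have h := hmemz (l + 1) (by omega) (by omega)
      push_cast at h; exact h
    rw [hFsub _ hm1 _ hm2]
    have hlen : ((l : ℝ) + 1) / n - (l : ℝ) / n = 1 / n := by field_simp; ring
    have hconst : r ((l : ℝ) / n) / n = ∫ _ in ((l : ℝ) / n)..(((l : ℝ) + 1) / n),
        r ((l : ℝ) / n) := by
      rw [intervalIntegral.integral_const, smul_eq_mul, hlen]; ring
    rw [hconst, ← intervalIntegral.integral_sub (hint _ _ hm1 hm2) intervalIntegrable_const]
    have hb := intervalIntegral.norm_integral_le_of_norm_le_const
      (C := K / n) (a := (l : ℝ) / n) (b := ((l : ℝ) + 1) / n)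
      (f := fun s => r s - r ((l : ℝ) / n)) ?_
    · rw [Real.norm_eq_abs] at hb
      calc |∫ s in ((l : ℝ) / n)..(((l : ℝ) + 1) / n), (r s - r ((l : ℝ) / n))|
          ≤ K / n * |((l : ℝ) + 1) / n - (l : ℝ) / n| := hb
        _ = K / (n : ℝ) ^ 2 := by
            rw [hlen, abs_of_pos (by positivity), sq]
            ring
    · intro x hx
      have hle : (l : ℝ) / n ≤ ((l : ℝ) + 1) / n := by
        gcongr
        linarith
      have hxIoc : x ∈ Set.Ioc ((l : ℝ) / n) (((l : ℝ) + 1) / n) := by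
        rwa [Set.uIoc_of_le hle] at hx
      have hxIc : x ∈ Set.Icc (-1 : ℝ) 1 :=
        ⟨le_trans hm1.1 (le_of_lt hxIoc.1), le_trans hxIoc.2 hm2.2⟩
      rw [Real.norm_eq_abs]
      calc |r x - r ((l : ℝ) / n)| ≤ K * |x - (l : ℝ) / n| := hlip x hxIc _ hm1
        _ ≤ K * (1 / n) := by
            apply mul_le_mul_of_nonneg_left ?_ hK0
            rw [abs_of_nonneg (by linarith [hxIoc.1])]
            linarith [hxIoc.2, hlen]
        _ = K / n := by ring
  -- telescoping comparison with F
  set f : ℤ → ℝ := fun l => F ((l : ℝ) / n) with hf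
  have hfsucc : ∀ l : ℤ, f (l + 1) = F (((l : ℝ) + 1) / n) := by
    intro l; simp only [hf]; norm_num
  have claim1 : ∀ j : ℤ, 1 - (n : ℤ) ≤ j → j ≤ (n : ℤ) →
      |(∑ l ∈ Finset.Icc j ((n : ℤ) - 1), (a0 l - a1 (l + 1))) - F ((j : ℝ) / n) / n|
        ≤ 2 * n * (μ / (n : ℝ) ^ α + K / (n : ℝ) ^ 3) := by
    intro j hj1 hj2
    have htel : ∑ l ∈ Finset.Icc j ((n : ℤ) - 1), (f l - f (l + 1)) = f j - f ((n : ℤ) - 1 + 1) :=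
      tele_sum f j ((n : ℤ) - 1) (by omega)
    have hfn : f ((n : ℤ) - 1 + 1) = 0 := by
      rw [show (n : ℤ) - 1 + 1 = (n : ℤ) by ring]
      simp only [hf]
      rw [show ((n : ℤ) : ℝ) / n = 1 by push_cast; field_simp]
      exact hF1
    have hsplit : (∑ l ∈ Finset.Icc j ((n : ℤ) - 1), (a0 l - a1 (l + 1))) - F ((j : ℝ) / n) / n
        = ∑ l ∈ Finset.Icc j ((n : ℤ) - 1), ((a0 l - a1 (l + 1)) - (f l - f (l + 1)) / n) := by
      have h1 : ∑ l ∈ Finset.Icc j ((n : ℤ) - 1), ((a0 l - a1 (l + 1)) - (f l - f (l + 1)) / n)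
          = (∑ l ∈ Finset.Icc j ((n : ℤ) - 1), (a0 l - a1 (l + 1)))
            - (∑ l ∈ Finset.Icc j ((n : ℤ) - 1), (f l - f (l + 1))) / n := by
        rw [Finset.sum_sub_distrib, Finset.sum_div]
      rw [h1, htel, hfn]
      simp only [hf]
      ring
    rw [hsplit]
    have hcard : (((Finset.Icc j ((n : ℤ) - 1)).card : ℕ) : ℝ) ≤ 2 * n := by
      have h1 : (Finset.Icc j ((n : ℤ) - 1)).card = ((n : ℤ) - 1 + 1 - j).toNat := Int.card_Icc _ _
      have h2 : ((n : ℤ) - 1 + 1 - j).toNat ≤ 2 * n := by omega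
      calc (((Finset.Icc j ((n : ℤ) - 1)).card : ℕ) : ℝ) ≤ ((2 * n : ℕ) : ℝ) := by
            rw [h1]; exact_mod_cast h2
        _ = 2 * n := by push_cast; ring
    calc |∑ l ∈ Finset.Icc j ((n : ℤ) - 1), ((a0 l - a1 (l + 1)) - (f l - f (l + 1)) / n)|
        ≤ ∑ l ∈ Finset.Icc j ((n : ℤ) - 1), |(a0 l - a1 (l + 1)) - (f l - f (l + 1)) / n| :=
          Finset.abs_sum_le_sum_abs _ _
      _ ≤ (Finset.Icc j ((n : ℤ) - 1)).card • (μ / (n : ℝ) ^ α + K / (n : ℝ) ^ 3) := by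
          apply Finset.sum_le_card_nsmul
          intro l hl
          rw [Finset.mem_Icc] at hl
          have hl1 : 1 - (n : ℤ) ≤ l := le_trans hj1 hl.1
          have hl2 : l ≤ (n : ℤ) - 1 := hl.2
          have e1 := herr l hl1 (by omega)
          have e2 := hstep l hl1 hl2
          have e3 : |r ((l : ℝ) / n) / (n : ℝ) ^ 2 - (f l - f (l + 1)) / n| ≤ K / (n : ℝ) ^ 3 := by
            rw [hfsucc l]
            have heq : r ((l : ℝ) / n) / (n : ℝ) ^ 2 - (F ((l : ℝ) / n) - F (((l : ℝ) + 1) / n)) / n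
                = -(((F ((l : ℝ) / n) - F (((l : ℝ) + 1) / n)) - r ((l : ℝ) / n) / n) / n) := by
              field_simp
              ring
            rw [heq, abs_neg, abs_div, abs_of_pos hNpos]
            calc |(F ((l : ℝ) / n) - F (((l : ℝ) + 1) / n)) - r ((l : ℝ) / n) / n| / n
                ≤ (K / (n : ℝ) ^ 2) / n := by gcongr
              _ = K / (n : ℝ) ^ 3 := by ring
          calc |(a0 l - a1 (l + 1)) - (f l - f (l + 1)) / n|
              ≤ |a0 l - a1 (l + 1) - r ((l : ℝ) / n) / (n : ℝ) ^ 2|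
                + |r ((l : ℝ) / n) / (n : ℝ) ^ 2 - (f l - f (l + 1)) / n| := by
                have h := abs_sub_le (a0 l - a1 (l + 1)) (r ((l : ℝ) / n) / (n : ℝ) ^ 2)
                  ((f l - f (l + 1)) / n)
                exact h
            _ ≤ μ / (n : ℝ) ^ α + K / (n : ℝ) ^ 3 := add_le_add e1 e3
      _ ≤ 2 * n * (μ / (n : ℝ) ^ α + K / (n : ℝ) ^ 3) := by
          rw [nsmul_eq_mul]
          apply mul_le_mul_of_nonneg_right hcard (by positivity)
  have hBnn : (0 : ℝ) ≤ M / (n : ℝ) ^ 2 + μ / (n : ℝ) ^ α := by positivity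
  have claim2 : ∀ j ∈ Finset.Icc (1 - (n : ℤ)) Ln,
      |∑ l ∈ Finset.Icc j Ln, (a0 l - a1 (l + 1))|
        ≤ |F ((j : ℝ) / n)| / n
          + (2 * n * (μ / (n : ℝ) ^ α + K / (n : ℝ) ^ 3) + (M / (n : ℝ) ^ 2 + μ / (n : ℝ) ^ α)) := by
    intro j hj
    rw [Finset.mem_Icc] at hj
    rcases hcase with hc | hc
    · rw [hc]
      have h1 := claim1 j hj.1 (by omega)
      have h2 := abs_sub_abs_le_abs_sub (∑ l ∈ Finset.Icc j ((n : ℤ) - 1), (a0 l - a1 (l + 1)))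
        (F ((j : ℝ) / n) / n)
      have h3 : |F ((j : ℝ) / n) / n| = |F ((j : ℝ) / n)| / n := by
        rw [abs_div, abs_of_pos hNpos]
      nlinarith [abs_nonneg (F ((j : ℝ) / n))]
    · -- Ln = n : split off the top term
      have hjn : j ≤ (n : ℤ) := by omega
      have hins : Finset.Icc j (n : ℤ) = insert (n : ℤ) (Finset.Icc j ((n : ℤ) - 1)) := by
        ext x; simp only [Finset.mem_Icc, Finset.mem_insert]; omega
      rw [hc, hins, Finset.sum_insert (by simp only [Finset.mem_Icc]; omega)]
      have h1 := claim1 j hj.1 hjn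
      have htop : |a0 (n : ℤ) - a1 ((n : ℤ) + 1)| ≤ M / (n : ℝ) ^ 2 + μ / (n : ℝ) ^ α := by
        have e1 := herr (n : ℤ) (by omega) (by omega)
        have hr1 : |r (((n : ℤ) : ℝ) / n)| ≤ M := by
          apply hM
          exact hmemz (n : ℤ) (by omega) le_rfl
        have e2 : |r (((n : ℤ) : ℝ) / n) / (n : ℝ) ^ 2| ≤ M / (n : ℝ) ^ 2 := by
          rw [abs_div, abs_of_pos (by positivity : (0:ℝ) < (n : ℝ) ^ 2)]
          gcongr
        calc |a0 (n : ℤ) - a1 ((n : ℤ) + 1)|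
            ≤ |a0 (n : ℤ) - a1 ((n : ℤ) + 1) - r (((n : ℤ) : ℝ) / n) / (n : ℝ) ^ 2|
              + |r (((n : ℤ) : ℝ) / n) / (n : ℝ) ^ 2| := by
              have := abs_add_le (a0 (n : ℤ) - a1 ((n : ℤ) + 1) - r (((n : ℤ) : ℝ) / n) / (n : ℝ) ^ 2)
                (r (((n : ℤ) : ℝ) / n) / (n : ℝ) ^ 2)
              simpa using this
          _ ≤ μ / (n : ℝ) ^ α + M / (n : ℝ) ^ 2 := add_le_add e1 e2
          _ = M / (n : ℝ) ^ 2 + μ / (n : ℝ) ^ α := by ring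
      have h2 := abs_sub_abs_le_abs_sub (∑ l ∈ Finset.Icc j ((n : ℤ) - 1), (a0 l - a1 (l + 1)))
        (F ((j : ℝ) / n) / n)
      have h3 : |F ((j : ℝ) / n) / n| = |F ((j : ℝ) / n)| / n := by
        rw [abs_div, abs_of_pos hNpos]
      have h4 := abs_add_le (a0 (n : ℤ) - a1 ((n : ℤ) + 1))
        (∑ l ∈ Finset.Icc j ((n : ℤ) - 1), (a0 l - a1 (l + 1)))
      nlinarith [abs_nonneg (F ((j : ℝ) / n))]
  -- Riemann sum comparison
  set G : ℤ → ℝ := fun j => ∫ t in (-1 : ℝ)..((j : ℝ) / n), |F t| with hG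
  have hm1Ic : (-1 : ℝ) ∈ Set.Icc (-1 : ℝ) 1 := by constructor <;> norm_num
  have claim3 : ∀ j ∈ Finset.Icc (1 - (n : ℤ)) Ln,
      |F ((j : ℝ) / n)| / n ≤ (G j - G (j - 1)) + M / (n : ℝ) ^ 2 := by
    intro j hj
    rw [Finset.mem_Icc] at hj
    have hjm : (j : ℝ) / n ∈ Set.Icc (-1 : ℝ) 1 := hmemz j (by omega) (by omega)
    have hjm1 : ((j : ℝ) - 1) / n ∈ Set.Icc (-1 : ℝ) 1 := by
      have h := hmemz (j - 1) (by omega) (by omega)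
      push_cast at h; exact h
    have hGdiff : G j - G (j - 1) = ∫ t in (((j : ℝ) - 1) / n)..((j : ℝ) / n), |F t| := by
      have h := intervalIntegral.integral_add_adjacent_intervals
        (hintF (-1) (((j : ℝ) - 1) / n) hm1Ic hjm1) (hintF (((j : ℝ) - 1) / n) ((j : ℝ) / n) hjm1 hjm)
      have hc : (((j - 1 : ℤ)) : ℝ) / n = ((j : ℝ) - 1) / n := by push_cast; ring
      simp only [hG, hc]
      linarith
    have hle : ((j : ℝ) - 1) / n ≤ (j : ℝ) / n := by gcongr; linarith
    have hdiff : (j : ℝ) / n - ((j : ℝ) - 1) / n = 1 / n := by field_simp; ring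
    have hpoint : ∀ t ∈ Set.Icc (((j : ℝ) - 1) / n) ((j : ℝ) / n),
        |F ((j : ℝ) / n)| - M / n ≤ |F t| := by
      intro t ht
      have htIc : t ∈ Set.Icc (-1 : ℝ) 1 := ⟨le_trans hjm1.1 ht.1, le_trans ht.2 hjm.2⟩
      have h1 : |F ((j : ℝ) / n)| - |F t| ≤ |F ((j : ℝ) / n) - F t| := abs_sub_abs_le_abs_sub _ _
      have h2 : |F ((j : ℝ) / n) - F t| ≤ M * |t - (j : ℝ) / n| := hFlip _ hjm t htIc
      have h3 : |t - (j : ℝ) / n| ≤ 1 / n := by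
        rw [abs_sub_comm, abs_of_nonneg (by linarith [ht.2])]
        linarith [ht.1, hdiff]
      have h4 : M * |t - (j : ℝ) / n| ≤ M * (1 / n) := mul_le_mul_of_nonneg_left h3 hM0
      have h5 : M * (1 / n) = M / n := by ring
      linarith
    have hmono : ∫ _ in (((j : ℝ) - 1) / n)..((j : ℝ) / n), (|F ((j : ℝ) / n)| - M / n)
        ≤ ∫ t in (((j : ℝ) - 1) / n)..((j : ℝ) / n), |F t| :=
      intervalIntegral.integral_mono_on hle intervalIntegrable_const (hintF _ _ hjm1 hjm) hpoint
    rw [intervalIntegral.integral_const, smul_eq_mul, hdiff] at hmono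
    rw [hGdiff]
    have hexp : 1 / (n : ℝ) * (|F ((j : ℝ) / n)| - M / n)
        = |F ((j : ℝ) / n)| / n - M / (n : ℝ) ^ 2 := by
      field_simp
    linarith [hmono, hexp ▸ hmono]
  -- telescoping the G differences
  have htelG : ∑ j ∈ Finset.Icc (1 - (n : ℤ)) Ln, (G j - G (j - 1)) = G Ln - G (-(n : ℤ)) := by
    have h := tele_sum (fun j => -G (j - 1)) (1 - (n : ℤ)) Ln (by omega)
    have hcong : ∀ l ∈ Finset.Icc (1 - (n : ℤ)) Ln,
        G l - G (l - 1) = (fun j => -G (j - 1)) l - (fun j => -G (j - 1)) (l + 1) := by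
      intro l _
      simp only
      rw [show l + 1 - 1 = l by ring]
      ring
    rw [Finset.sum_congr rfl hcong, h]
    rw [show Ln + 1 - 1 = Ln by ring, show (1 : ℤ) - (n : ℤ) - 1 = -(n : ℤ) by ring]
    ring
  have hGn : G (-(n : ℤ)) = 0 := by
    simp only [hG]
    rw [show ((-(n : ℤ) : ℤ) : ℝ) / n = -1 by push_cast; field_simp]
    exact integral_same
  have hGL : G Ln ≤ ∫ t in (-1 : ℝ)..1, |F t| := by
    have hLm : ((Ln : ℤ) : ℝ) / n ∈ Set.Icc (-1 : ℝ) 1 := hmemz Ln (by omega) hLn2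
    have hadd := intervalIntegral.integral_add_adjacent_intervals
      (hintF (-1) ((Ln : ℝ) / n) hm1Ic hLm) (hintF ((Ln : ℝ) / n) 1 hLm h1mem)
    have hnn : 0 ≤ ∫ t in ((Ln : ℝ) / n)..1, |F t| :=
      intervalIntegral.integral_nonneg hLm.2 (fun u _ => abs_nonneg _)
    simp only [hG]
    linarith
  -- assemble
  have hcardT : (((Finset.Icc (1 - (n : ℤ)) Ln).card : ℕ) : ℝ) ≤ 2 * n := by
    have h1 : (Finset.Icc (1 - (n : ℤ)) Ln).card = (Ln + 1 - (1 - (n : ℤ))).toNat :=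
      Int.card_Icc _ _
    have h2 : (Ln + 1 - (1 - (n : ℤ))).toNat ≤ 2 * n := by omega
    calc (((Finset.Icc (1 - (n : ℤ)) Ln).card : ℕ) : ℝ) ≤ ((2 * n : ℕ) : ℝ) := by
          rw [h1]; exact_mod_cast h2
      _ = 2 * n := by push_cast; ring
  set B : ℝ := 2 * n * (μ / (n : ℝ) ^ α + K / (n : ℝ) ^ 3)
    + (M / (n : ℝ) ^ 2 + μ / (n : ℝ) ^ α) with hB
  have hBnn' : (0 : ℝ) ≤ M / (n : ℝ) ^ 2 + B := by
    rw [hB]; positivity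
  have hsum : qsum1 a0 a1 n Ln
      ≤ (∫ t in (-1 : ℝ)..1, |F t|) + 2 * n * (M / (n : ℝ) ^ 2 + B) := by
    unfold qsum1
    calc ∑ j ∈ Finset.Icc (1 - (n : ℤ)) Ln, |∑ l ∈ Finset.Icc j Ln, (a0 l - a1 (l + 1))|
        ≤ ∑ j ∈ Finset.Icc (1 - (n : ℤ)) Ln, ((G j - G (j - 1)) + (M / (n : ℝ) ^ 2 + B)) := by
          apply Finset.sum_le_sum
          intro j hj
          have c2 := claim2 j hj
          have c3 := claim3 j hj
          rw [hB]
          linarith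
      _ = (∑ j ∈ Finset.Icc (1 - (n : ℤ)) Ln, (G j - G (j - 1)))
          + (Finset.Icc (1 - (n : ℤ)) Ln).card • (M / (n : ℝ) ^ 2 + B) := by
          rw [Finset.sum_add_distrib, Finset.sum_const]
      _ ≤ (G Ln - G (-(n : ℤ))) + 2 * n * (M / (n : ℝ) ^ 2 + B) := by
          rw [htelG, nsmul_eq_mul]
          have := mul_le_mul_of_nonneg_right hcardT hBnn'
          linarith
      _ ≤ (∫ t in (-1 : ℝ)..1, |F t|) + 2 * n * (M / (n : ℝ) ^ 2 + B) := by
          rw [hGn]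
          linarith
  -- final algebra with rpow
  set P : ℝ := (n : ℝ) ^ ((2 : ℝ) - α) with hP
  have hPpos : 0 < P := Real.rpow_pos_of_pos hNpos _
  have hPA : P * (n : ℝ) ^ α = (n : ℝ) ^ 2 := by
    rw [hP, ← Real.rpow_add hNpos]
    rw [show (2 : ℝ) - α + α = 2 by ring]
    rw [show ((2 : ℝ)) = ((2 : ℕ) : ℝ) by norm_num, Real.rpow_natCast]
  have hμα : μ / (n : ℝ) ^ α = μ * P / (n : ℝ) ^ 2 := by
    rw [div_eq_div_iff (ne_of_gt hαpos) (by positivity : ((n : ℝ) ^ 2 : ℝ) ≠ 0)]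
    rw [mul_assoc, hPA]
  have halg : 2 * (n : ℝ) * (M / (n : ℝ) ^ 2 + B) ≤ (4 * M + 4 * K) / n + 6 * μ * P := by
    rw [hB, hμα]
    have hkey : 2 * (n : ℝ) * (M / (n : ℝ) ^ 2
        + (2 * n * (μ * P / (n : ℝ) ^ 2 + K / (n : ℝ) ^ 3) + (M / (n : ℝ) ^ 2 + μ * P / (n : ℝ) ^ 2)))
        = 4 * M / n + 4 * K / n + 4 * μ * P + 2 * μ * P / n := by
      field_simp
      ring
    rw [hkey]
    have hdle : 2 * μ * P / n ≤ 2 * μ * P := div_le_self (by positivity) hN1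
    have : (4 * M + 4 * K) / (n : ℝ) = 4 * M / n + 4 * K / n := by ring
    linarith
  have hFeq : (∫ t in (-1 : ℝ)..1, |F t|) = ∫ t in (-1 : ℝ)..1, |∫ s in t..(1 : ℝ), r s| := rfl
  linarith [hsum, halg, hFeq ▸ hsum]

/-- for a family of subdivision schemes `S_{a^n}` reproducing `Π₀`
(with `L_n = n−1` for all `n` or `L_n = n` for all `n`), a `C¹` function
`r : [−1,1] → ℝ` with `R(t) = ∫_t^1 r`, if
`a^{n,0}_j − a^{n,1}_{j+1} = r(j/n) n^{−2} + ε^n_j` with `|ε^n_j| ≤ μ n^{−α}`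
(`α > 2`, `μ > 0`) and `∫_{−1}^1 |R| < 1`, then there is `n₀ ∈ ℕ` with
`∑_{j=1−n}^{L_n} |q^{n,1}_j| < 1` for all `n ≥ n₀`. -/
theorem stmt17
    (a0 a1 : ℕ → ℤ → ℝ) (L : ℕ → ℤ)
    (hL : (∀ n : ℕ, L n = (n : ℤ) - 1) ∨ (∀ n : ℕ, L n = (n : ℤ)))
    (hrep : ∀ n : ℕ, 1 ≤ n →
      (∑ l ∈ Finset.Icc (1 - (n : ℤ)) (L n), a0 n l) = 1 ∧
      (∑ l ∈ Finset.Icc (1 - (n : ℤ)) (L n + 1), a1 n l) = 1)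
    (r r' : ℝ → ℝ)
    (hr' : ∀ t ∈ Set.Icc (-1 : ℝ) 1, HasDerivWithinAt r (r' t) (Set.Icc (-1 : ℝ) 1) t)
    (hr'c : ContinuousOn r' (Set.Icc (-1 : ℝ) 1))
    (α μ : ℝ) (hα : 2 < α) (hμ : 0 < μ)
    (herr : ∀ n : ℕ, 1 ≤ n → ∀ j : ℤ, 1 - (n : ℤ) ≤ j → j ≤ L n →
      |a0 n j - a1 n (j + 1) - r ((j : ℝ) / n) / (n : ℝ) ^ 2| ≤ μ / (n : ℝ) ^ α)
    (hRlt : (∫ t in (-1 : ℝ)..1, |∫ s in t..(1 : ℝ), r s|) < 1) :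
    ∃ n₀ : ℕ, ∀ n : ℕ, n₀ ≤ n → qsum1 (a0 n) (a1 n) n (L n) < 1 := by
  have hrc : ContinuousOn r (Set.Icc (-1 : ℝ) 1) :=
    fun t ht => (hr' t ht).continuousWithinAt
  obtain ⟨M0, hM0b⟩ := (isCompact_Icc (a := (-1 : ℝ)) (b := 1)).exists_bound_of_continuousOn hrc
  obtain ⟨K0, hK0b⟩ := (isCompact_Icc (a := (-1 : ℝ)) (b := 1)).exists_bound_of_continuousOn hr'c
  set M := max M0 0 with hMdef
  set K := max K0 0 with hKdef
  have hM : ∀ t ∈ Set.Icc (-1 : ℝ) 1, |r t| ≤ M := fun t ht =>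
    le_trans (by simpa [Real.norm_eq_abs] using hM0b t ht) (le_max_left _ _)
  have hlip : ∀ s ∈ Set.Icc (-1 : ℝ) 1, ∀ t ∈ Set.Icc (-1 : ℝ) 1,
      |r s - r t| ≤ K * |s - t| := by
    intro s hs t ht
    have hb : ∀ x ∈ Set.Icc (-1 : ℝ) 1, ‖r' x‖ ≤ K :=
      fun x hx => le_trans (hK0b x hx) (le_max_left _ _)
    have := Convex.norm_image_sub_le_of_norm_hasDerivWithin_le hr' hb (convex_Icc _ _) ht hs
    simpa [Real.norm_eq_abs] using this
  set I := ∫ t in (-1 : ℝ)..1, |∫ s in t..(1 : ℝ), r s| with hI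
  have hE : Filter.Tendsto
      (fun n : ℕ => (4 * M + 4 * K) / (n : ℝ) + 6 * μ * (n : ℝ) ^ ((2 : ℝ) - α))
      Filter.atTop (nhds 0) := by
    have t1 := tendsto_const_div_atTop_nhds_zero_nat (4 * M + 4 * K)
    have t2 : Filter.Tendsto (fun n : ℕ => (n : ℝ) ^ ((2 : ℝ) - α)) Filter.atTop (nhds 0) := by
      have h := (tendsto_rpow_neg_atTop (y := α - 2) (by linarith)).comp
        (tendsto_natCast_atTop_atTop (R := ℝ))
      convert h using 2 with n
      · congr 1; ring
    have t2' := t2.const_mul (6 * μ)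
    simpa using t1.add t2'
  have hev : ∀ᶠ n : ℕ in Filter.atTop,
      (4 * M + 4 * K) / (n : ℝ) + 6 * μ * (n : ℝ) ^ ((2 : ℝ) - α) < 1 - I :=
    hE.eventually_lt_const (by linarith)
  obtain ⟨n₁, hn₁⟩ := Filter.eventually_atTop.mp hev
  refine ⟨max n₁ 1, fun n hn => ?_⟩
  have hn1 : 1 ≤ n := le_trans (le_max_right _ _) hn
  have hLn1 : (n : ℤ) - 1 ≤ L n := by rcases hL with h | h <;> rw [h n] <;> omega
  have hLn2 : L n ≤ (n : ℤ) := by rcases hL with h | h <;> rw [h n] <;> omega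
  have hcase : L n = (n : ℤ) - 1 ∨ L n = (n : ℤ) := by
    rcases hL with h | h
    · exact Or.inl (h n)
    · exact Or.inr (h n)
  have hb := stmt17_aux (a0 n) (a1 n) (L n) n hn1 hLn1 hLn2 r hrc M K
    (le_max_right _ _) (le_max_right _ _) hM hlip α μ hα hμ (herr n hn1) hcase
  have hlt := hn₁ n (le_trans (le_max_left _ _) hn)
  rw [← hI] at hb
  linarith
end

section
/- Suppose each S_{a^n} reproduces Π₀ and is odd-symmetric, i.e., a^{n,0}_l = a^{n,0}_{L_n+1−n−l} for all l = 1−n,…,L_n and a^{n,1}_l = a^{n,1}_{L_n+2−n−l} for all l = 1−n,…,L_n+1. Let r : [−1,1] → ℝ be C¹ with R(t) = ∫_{−1}^{t} r(s) ds, and assume there exist α > 2 and μ > 0 such that for all n and all j = 1−n,…,L_n, a^{n,0}_j − a^{n,1}_j = r(j/n)·n^{−2} + ε^n_j with |ε^n_j| ≤ μ·n^{−α}, and ∫_{−1}^{1} |R(t)| dt < 1. Then there exists n₀ ∈ ℕ such that the subdivision scheme S_{a^n} is uniformly convergent for every n > n₀. -/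
/-- The subdivision operator of the family `S_{a^n}`:
`(S f)_{2j} = ∑_{l=1−n}^{L_n} a^{n,0}_l f_{j+l}` and
`(S f)_{2j+1} = ∑_{l=1−n}^{L_n+1} a^{n,1}_l f_{j+l}`. -/
noncomputable def Sfam (a0 a1 : ℤ → ℝ) (nn Ln : ℤ) (f : ℤ → ℝ) : ℤ → ℝ := fun m =>
  if m % 2 = 0 then
    ∑ l ∈ Finset.Icc (1 - nn) Ln, a0 l * f (m / 2 + l)
  else
    ∑ l ∈ Finset.Icc (1 - nn) (Ln + 1), a1 l * f ((m - 1) / 2 + l)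

/-- A bounded real sequence indexed by `ℤ`. -/
def IsBoundedSeq (f : ℤ → ℝ) : Prop := ∃ M : ℝ, ∀ j : ℤ, |f j| ≤ M

/-- `S^k f⁰` converges uniformly to `F`:
`lim_{k→∞} sup_{j∈ℤ} |(S^k f⁰)_j − F(2^{−k} j)| = 0`. -/
def ConvergesUniformlyTo (S : (ℤ → ℝ) → (ℤ → ℝ)) (f : ℤ → ℝ) (F : ℝ → ℝ) : Prop :=
  ∀ ε : ℝ, 0 < ε → ∃ K : ℕ, ∀ k : ℕ, K ≤ k → ∀ j : ℤ,
    |(S^[k] f) j - F ((j : ℝ) / 2 ^ k)| ≤ ε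

/-- A subdivision scheme is uniformly convergent if every bounded initial sequence
has a continuous limit function. -/
def UnifConvergent (S : (ℤ → ℝ) → (ℤ → ℝ)) : Prop :=
  ∀ f : ℤ → ℝ, IsBoundedSeq f → ∃ F : ℝ → ℝ, Continuous F ∧ ConvergesUniformlyTo S f F


section Helpers
open Filter MeasureTheory intervalIntegral

/-- floor-half on integers. -/
def hhalf (m : ℤ) : ℤ := if m % 2 = 0 then m / 2 else (m - 1) / 2

lemma hhalf_floor (y : ℝ) : hhalf ⌊2 * y⌋ = ⌊y⌋ := by
  set m := ⌊2 * y⌋ with hm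
  have h1 : (m : ℝ) ≤ 2 * y := Int.floor_le _
  have h2 : 2 * y < m + 1 := Int.lt_floor_add_one _
  unfold hhalf
  rcases Int.emod_two_eq m with h | h
  · rw [if_pos h]
    have hmm : 2 * (m / 2) = m := by omega
    have hc : (2:ℝ) * ((m/2 : ℤ) : ℝ) = (m : ℝ) := by exact_mod_cast congrArg (Int.cast : ℤ → ℝ) hmm
    symm; rw [Int.floor_eq_iff]
    constructor
    · nlinarith
    · nlinarith
  · rw [if_neg (by omega)]
    have hmm : 2 * ((m - 1) / 2) = m - 1 := by omega
    have hc : (2:ℝ) * (((m-1)/2 : ℤ) : ℝ) = (m : ℝ) - 1 := by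
      exact_mod_cast congrArg (Int.cast : ℤ → ℝ) hmm
    symm; rw [Int.floor_eq_iff]
    constructor
    · nlinarith
    · nlinarith

lemma abs_sub_le_of_unit_diff (g : ℤ → ℝ) (D : ℝ) (hD : ∀ j : ℤ, |g (j+1) - g j| ≤ D)
    (j j' : ℤ) (h : |j - j'| ≤ 1) : |g j - g j'| ≤ D := by
  have hD0 : 0 ≤ D := le_trans (abs_nonneg _) (hD 0)
  have hcases : j = j' ∨ j = j' + 1 ∨ j' = j + 1 := by
    rw [abs_le] at h; omega
  rcases hcases with h | h | h
  · simp [h, hD0]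
  · rw [h]; exact hD j'
  · rw [abs_sub_comm, h]; exact hD j

lemma abstract_conv (S : (ℤ → ℝ) → (ℤ → ℝ)) (γ C : ℝ) (hγ0 : 0 ≤ γ) (hγ1 : γ < 1) (hC : 0 ≤ C)
    (hcontract : ∀ f : ℤ → ℝ, ∀ D : ℝ, (∀ j : ℤ, |f (j+1) - f j| ≤ D) →
      ∀ m : ℤ, |S f (m+1) - S f m| ≤ γ * D)
    (hprox : ∀ f : ℤ → ℝ, ∀ D : ℝ, (∀ j : ℤ, |f (j+1) - f j| ≤ D) →
      ∀ m : ℤ, |S f m - f (hhalf m)| ≤ C * D) :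
    UnifConvergent S := by
  intro f hfb
  obtain ⟨M, hM⟩ := hfb
  set D0 : ℝ := 2 * M with hD0def
  have hM0 : 0 ≤ M := le_trans (abs_nonneg _) (hM 0)
  have hD0nn : 0 ≤ D0 := by positivity
  have hD0 : ∀ j : ℤ, |f (j+1) - f j| ≤ D0 := by
    intro j
    calc |f (j+1) - f j| ≤ |f (j+1)| + |f j| := abs_sub _ _
    _ ≤ M + M := add_le_add (hM _) (hM _)
    _ = D0 := by ring
  set g : ℕ → ℤ → ℝ := fun k => S^[k] f with hg
  have hgdiff : ∀ k : ℕ, ∀ j : ℤ, |g k (j+1) - g k j| ≤ γ ^ k * D0 := by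
    intro k
    induction k with
    | zero => simpa [hg] using hD0
    | succ k ih =>
      intro j
      have hit : g (k+1) = S (g k) := Function.iterate_succ_apply' S k f
      rw [hit]
      calc |S (g k) (j+1) - S (g k) j| ≤ γ * (γ ^ k * D0) := hcontract (g k) _ ih j
      _ = γ ^ (k+1) * D0 := by ring
  have hgstep : ∀ k : ℕ, ∀ m : ℤ, |g (k+1) m - g k (hhalf m)| ≤ C * D0 * γ ^ k := by
    intro k m
    have hit : g (k+1) = S (g k) := Function.iterate_succ_apply' S k f
    rw [hit]
    calc |S (g k) m - g k (hhalf m)| ≤ C * (γ ^ k * D0) := hprox (g k) _ (hgdiff k) m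
    _ = C * D0 * γ ^ k := by ring
  set u : ℝ → ℕ → ℝ := fun x k => g k ⌊x * 2 ^ k⌋ with hu
  have hfloorstep : ∀ (x : ℝ) (k : ℕ), hhalf ⌊x * 2 ^ (k+1)⌋ = ⌊x * 2 ^ k⌋ := by
    intro x k
    have hxx : x * 2 ^ (k+1) = 2 * (x * 2 ^ k) := by ring
    rw [hxx, hhalf_floor]
  have hucauchy : ∀ x : ℝ, ∀ k : ℕ, dist (u x k) (u x (k+1)) ≤ C * D0 * γ ^ k := by
    intro x k
    rw [Real.dist_eq, abs_sub_comm]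
    have := hgstep k ⌊x * 2 ^ (k+1)⌋
    rwa [hfloorstep x k] at this
  have hcs : ∀ x : ℝ, ∃ Fx : ℝ, Tendsto (u x) atTop (nhds Fx) := by
    intro x
    exact cauchySeq_tendsto_of_complete (cauchySeq_of_le_geometric γ (C * D0) hγ1 (hucauchy x))
  choose F hF using hcs
  have htail : ∀ x : ℝ, ∀ k : ℕ, |u x k - F x| ≤ C * D0 * γ ^ k / (1 - γ) := by
    intro x k
    have := dist_le_of_le_geometric_of_tendsto γ (C * D0) hγ1 (hucauchy x) (hF x) k
    rwa [Real.dist_eq] at this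
  have h1γ : 0 < 1 - γ := by linarith
  refine ⟨F, ?_, ?_⟩
  · -- continuity
    rw [Metric.continuous_iff]
    intro x ε hε
    have hQ : Tendsto (fun k : ℕ => (2 * (C * D0 / (1 - γ)) + D0) * γ ^ k) atTop (nhds 0) := by
      simpa using (tendsto_pow_atTop_nhds_zero_of_lt_one hγ0 hγ1).const_mul
        (2 * (C * D0 / (1 - γ)) + D0)
    obtain ⟨k, hk⟩ := (hQ.eventually (gt_mem_nhds hε)).exists
    refine ⟨1 / 2 ^ k, by positivity, ?_⟩
    intro y hy
    have h2k : (0:ℝ) < 2 ^ k := by positivity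
    have h1 : |y * 2 ^ k - x * 2 ^ k| < 1 := by
      rw [Real.dist_eq] at hy
      have h3 : |y - x| * 2 ^ k < 1 := by
        calc |y - x| * 2 ^ k < 1 / 2 ^ k * 2 ^ k := mul_lt_mul_of_pos_right hy h2k
        _ = 1 := by field_simp
      calc |y * 2 ^ k - x * 2 ^ k| = |y - x| * 2 ^ k := by
            rw [← sub_mul, abs_mul, abs_of_pos h2k]
      _ < 1 := h3
    have hla : |⌊y * 2 ^ k⌋ - ⌊x * 2 ^ k⌋| ≤ 1 := by
      rw [abs_lt] at h1
      have hle1 : ⌊y * 2 ^ k⌋ ≤ ⌊x * 2 ^ k⌋ + 1 := by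
        have := Int.floor_le_floor (R := ℝ) (show y * 2 ^ k ≤ x * 2 ^ k + (1:ℤ) by push_cast; linarith)
        rwa [Int.floor_add_intCast] at this
      have hle2 : ⌊x * 2 ^ k⌋ ≤ ⌊y * 2 ^ k⌋ + 1 := by
        have := Int.floor_le_floor (R := ℝ) (show x * 2 ^ k ≤ y * 2 ^ k + (1:ℤ) by push_cast; linarith)
        rwa [Int.floor_add_intCast] at this
      rw [abs_le]; omega
    have hmid : |u y k - u x k| ≤ γ ^ k * D0 :=
      abs_sub_le_of_unit_diff (g k) _ (hgdiff k) _ _ hla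
    have hty := htail y k
    have htx := htail x k
    rw [Real.dist_eq]
    calc |F y - F x| = |(F y - u y k) + (u y k - u x k) + (u x k - F x)| := by ring_nf
    _ ≤ |F y - u y k| + |u y k - u x k| + |u x k - F x| := by
        exact (abs_add_three _ _ _)
    _ ≤ C * D0 * γ ^ k / (1 - γ) + γ ^ k * D0 + C * D0 * γ ^ k / (1 - γ) := by
        rw [abs_sub_comm (F y)]
        exact add_le_add (add_le_add hty hmid) htx
    _ = (2 * (C * D0 / (1 - γ)) + D0) * γ ^ k := by field_simp; ring
    _ < ε := hk
  · -- uniform convergence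
    intro ε hε
    have hQ : Tendsto (fun k : ℕ => C * D0 / (1 - γ) * γ ^ k) atTop (nhds 0) := by
      simpa using (tendsto_pow_atTop_nhds_zero_of_lt_one hγ0 hγ1).const_mul (C * D0 / (1 - γ))
    obtain ⟨K, hK⟩ := Filter.eventually_atTop.1 (hQ.eventually (ge_mem_nhds hε))
    refine ⟨K, ?_⟩
    intro k hk j
    have hx : ((j:ℝ) / 2 ^ k) * 2 ^ k = (j:ℝ) := by
      field_simp
    have ht := htail ((j:ℝ) / 2 ^ k) k
    have hux : u ((j:ℝ) / 2 ^ k) k = g k j := by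
      simp only [hu, hx, Int.floor_intCast]
    rw [hux] at ht
    have hmono : C * D0 * γ ^ k / (1 - γ) ≤ ε := by
      have := hK k hk
      calc C * D0 * γ ^ k / (1 - γ) = C * D0 / (1 - γ) * γ ^ k := by ring
      _ ≤ ε := this
    exact le_trans ht hmono


lemma sum_Icc_succ_top' (f : ℤ → ℝ) (a b : ℤ) (h : a ≤ b + 1) :
    ∑ l ∈ Finset.Icc a (b+1), f l = (∑ l ∈ Finset.Icc a b, f l) + f (b+1) := by
  have : Finset.Icc a (b+1) = insert (b+1) (Finset.Icc a b) := by
    ext x; simp [Finset.mem_Icc]; omega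
  rw [this, Finset.sum_insert (by simp [Finset.mem_Icc])]
  ring

lemma sum_Icc_top (f : ℤ → ℝ) (a b : ℤ) (h : a ≤ b) :
    ∑ l ∈ Finset.Icc a b, f l = (∑ l ∈ Finset.Icc a (b-1), f l) + f b := by
  have := sum_Icc_succ_top' f a (b-1) (by omega)
  rw [show b - 1 + 1 = b by ring] at this
  exact this

/-- Abel summation on `Icc a b` of integers. -/
lemma abel_sum (e f : ℤ → ℝ) (a : ℤ) : ∀ b : ℤ, a - 1 ≤ b →
    ∑ l ∈ Finset.Icc a b, e l * f l =
    (∑ l ∈ Finset.Icc a (b-1), (∑ k ∈ Finset.Icc a l, e k) * (f l - f (l+1)))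
      + (∑ k ∈ Finset.Icc a b, e k) * f b := by
  refine Int.le_induction ?_ ?_
  · have h1 : Finset.Icc a (a-1) = ∅ := Finset.Icc_eq_empty_of_lt (by omega)
    have h2 : Finset.Icc a (a-1-1) = ∅ := Finset.Icc_eq_empty_of_lt (by omega)
    simp [h1, h2]
  · intro b hb ih
    rw [sum_Icc_succ_top' (fun l => e l * f l) a b (by omega)]
    rw [sum_Icc_succ_top' e a b (by omega)]
    rw [show b + 1 - 1 = b by ring]
    by_cases hba : a ≤ b
    · rw [sum_Icc_top (fun l => (∑ k ∈ Finset.Icc a l, e k) * (f l - f (l+1))) a b hba]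
      rw [ih]
      have hsp : ∑ k ∈ Finset.Icc a b, e k = (∑ k ∈ Finset.Icc a (b-1), e k) + e b :=
        sum_Icc_top e a b hba
      rw [hsp]
      ring
    · have hb' : b = a - 1 := by omega
      subst hb'
      have h1 : Finset.Icc a (a-1) = ∅ := Finset.Icc_eq_empty_of_lt (by omega)
      rw [show a - 1 + 1 = a by ring]
      simp [h1]

/-- Reflection of a sum over `Icc`. -/
lemma sum_Icc_reflect (f : ℤ → ℝ) (a b c : ℤ) :
    ∑ k ∈ Finset.Icc a b, f k = ∑ k ∈ Finset.Icc (c - b) (c - a), f (c - k) := by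
  apply Finset.sum_nbij' (i := fun i => c - i) (j := fun j => c - j) <;>
    (intros; simp_all [Finset.mem_Icc]) <;> omega

/-- Splitting a sum over `Icc`. -/
lemma sum_Icc_split (f : ℤ → ℝ) (a b m : ℤ) (h1 : a - 1 ≤ m) (h2 : m ≤ b) :
    ∑ k ∈ Finset.Icc a b, f k =
      (∑ k ∈ Finset.Icc a m, f k) + ∑ k ∈ Finset.Icc (m+1) b, f k := by
  rw [← Finset.sum_union]
  · congr 1
    ext x; simp [Finset.mem_Icc]; omega
  · rw [Finset.disjoint_left]
    intro x hx hx'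
    simp [Finset.mem_Icc] at hx hx'
    omega

lemma sum_Icc_bot (f : ℤ → ℝ) (a b : ℤ) (h : a ≤ b) :
    ∑ l ∈ Finset.Icc a b, f l = f a + ∑ l ∈ Finset.Icc (a+1) b, f l := by
  have : Finset.Icc a b = insert a (Finset.Icc (a+1) b) := by
    ext x; simp [Finset.mem_Icc]; omega
  rw [this, Finset.sum_insert (by simp [Finset.mem_Icc])]

lemma sum_Icc_shift (f : ℤ → ℝ) (a b t : ℤ) :
    ∑ k ∈ Finset.Icc a b, f k = ∑ k ∈ Finset.Icc (a+t) (b+t), f (k - t) := by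
  apply Finset.sum_nbij' (i := fun i => i + t) (j := fun j => j - t) <;>
    (intros; simp_all [Finset.mem_Icc]) <;> omega

lemma Sfam_even (a0 a1 : ℤ → ℝ) (N Ln : ℤ) (f : ℤ → ℝ) (j : ℤ) :
    Sfam a0 a1 N Ln f (2*j) = ∑ l ∈ Finset.Icc (1-N) Ln, a0 l * f (j + l) := by
  unfold Sfam
  rw [if_pos (by omega : (2*j) % 2 = 0)]
  have : (2*j)/2 = j := by omega
  rw [this]

lemma Sfam_odd (a0 a1 : ℤ → ℝ) (N Ln : ℤ) (f : ℤ → ℝ) (j : ℤ) :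
    Sfam a0 a1 N Ln f (2*j+1) = ∑ l ∈ Finset.Icc (1-N) (Ln+1), a1 l * f (j + l) := by
  unfold Sfam
  rw [if_neg (by omega : ¬ (2*j+1) % 2 = 0)]
  have : (2*j+1-1)/2 = j := by omega
  rw [this]

section Diff
variable (a0 a1 : ℤ → ℝ) (N Ln : ℤ)

lemma diff_oddeven (hN : 1 ≤ N) (hLn : 1 - N ≤ Ln)
    (hrep0 : ∑ l ∈ Finset.Icc (1-N) Ln, a0 l = 1)
    (hrep1 : ∑ l ∈ Finset.Icc (1-N) (Ln+1), a1 l = 1)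
    (f : ℤ → ℝ) (j : ℤ) :
    Sfam a0 a1 N Ln f (2*j+1) - Sfam a0 a1 N Ln f (2*j) =
      ∑ l ∈ Finset.Icc (1-N) Ln,
        (∑ k ∈ Finset.Icc (1-N) l, (a1 k - a0 k)) * (f (j+l) - f (j+(l+1))) := by
  rw [Sfam_odd, Sfam_even]
  set e : ℤ → ℝ := fun l => a1 l - (if l ≤ Ln then a0 l else 0) with he
  have hcut : ∀ g : ℤ → ℝ,
      ∑ l ∈ Finset.Icc (1-N) (Ln+1), (if l ≤ Ln then a0 l else 0) * g l
        = ∑ l ∈ Finset.Icc (1-N) Ln, a0 l * g l := by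
    intro g
    rw [sum_Icc_succ_top' _ (1-N) Ln (by omega)]
    rw [if_neg (by omega), zero_mul, add_zero]
    apply Finset.sum_congr rfl
    intro x hx
    simp only [Finset.mem_Icc] at hx
    rw [if_pos hx.2]
  have hstep1 :
      (∑ l ∈ Finset.Icc (1-N) (Ln+1), a1 l * f (j+l))
        - (∑ l ∈ Finset.Icc (1-N) Ln, a0 l * f (j+l))
      = ∑ l ∈ Finset.Icc (1-N) (Ln+1), e l * f (j+l) := by
    rw [← hcut (fun l => f (j + l)), ← Finset.sum_sub_distrib]
    apply Finset.sum_congr rfl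
    intro x _
    simp only [he]
    ring
  rw [hstep1]
  have habel := abel_sum e (fun l => f (j+l)) (1-N) (Ln+1) (by omega)
  rw [habel]
  have htail : ∑ k ∈ Finset.Icc (1-N) (Ln+1), e k = 0 := by
    have : ∑ k ∈ Finset.Icc (1-N) (Ln+1), e k
        = (∑ k ∈ Finset.Icc (1-N) (Ln+1), a1 k)
          - ∑ k ∈ Finset.Icc (1-N) (Ln+1), (if k ≤ Ln then a0 k else 0) := by
      rw [← Finset.sum_sub_distrib]
    rw [this]
    have := hcut (fun _ => 1)
    simp only [mul_one] at this
    rw [this, hrep1, hrep0]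
    ring
  rw [htail, zero_mul, add_zero, show Ln + 1 - 1 = Ln by ring]
  apply Finset.sum_congr rfl
  intro x hx
  simp only [Finset.mem_Icc] at hx
  congr 1
  apply Finset.sum_congr rfl
  intro k hk
  simp only [Finset.mem_Icc] at hk
  simp only [he]
  rw [if_pos (by omega)]

lemma diff_evenodd (hN : 1 ≤ N) (hLn : 1 - N ≤ Ln)
    (hrep0 : ∑ l ∈ Finset.Icc (1-N) Ln, a0 l = 1)
    (hrep1 : ∑ l ∈ Finset.Icc (1-N) (Ln+1), a1 l = 1)
    (f : ℤ → ℝ) (j : ℤ) :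
    Sfam a0 a1 N Ln f (2*j+2) - Sfam a0 a1 N Ln f (2*j+1) =
      ∑ m ∈ Finset.Icc (1-N) Ln,
        (∑ k ∈ Finset.Icc (1-N) m, ((if 2-N ≤ k then a0 (k-1) else 0) - a1 k))
          * (f (j+m) - f (j+(m+1))) := by
  have h22 : 2*j+2 = 2*(j+1) := by ring
  rw [h22, Sfam_even, Sfam_odd]
  set c : ℤ → ℝ := fun k => (if 2-N ≤ k then a0 (k-1) else 0) - a1 k with hc
  have hshift : ∀ g : ℤ → ℝ,
      ∑ l ∈ Finset.Icc (1-N) Ln, a0 l * g (l+1)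
        = ∑ k ∈ Finset.Icc (1-N) (Ln+1), (if 2-N ≤ k then a0 (k-1) else 0) * g k := by
    intro g
    rw [sum_Icc_shift (fun l => a0 l * g (l+1)) (1-N) Ln 1]
    rw [show 1 - N + 1 = 2 - N by ring]
    rw [sum_Icc_bot _ (1-N) (Ln+1) (by omega)]
    rw [if_neg (by omega), zero_mul, zero_add]
    rw [show (1:ℤ) - N + 1 = 2 - N by ring]
    apply Finset.sum_congr rfl
    intro x hx
    simp only [Finset.mem_Icc] at hx
    rw [if_pos (by omega), show x - 1 + 1 = x by ring]
  have hstep1 :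
      (∑ l ∈ Finset.Icc (1-N) Ln, a0 l * f (j+1+l))
        - (∑ l ∈ Finset.Icc (1-N) (Ln+1), a1 l * f (j+l))
      = ∑ k ∈ Finset.Icc (1-N) (Ln+1), c k * f (j+k) := by
    have h1 : ∑ l ∈ Finset.Icc (1-N) Ln, a0 l * f (j+1+l)
        = ∑ l ∈ Finset.Icc (1-N) Ln, a0 l * (fun t => f (j+t)) (l+1) := by
      apply Finset.sum_congr rfl
      intro x _
      simp only []
      congr 1
      ring_nf
    rw [h1, hshift (fun t => f (j+t)), ← Finset.sum_sub_distrib]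
    apply Finset.sum_congr rfl
    intro x _
    simp only [hc]
    ring
  rw [hstep1]
  have habel := abel_sum c (fun l => f (j+l)) (1-N) (Ln+1) (by omega)
  rw [habel]
  have htail : ∑ k ∈ Finset.Icc (1-N) (Ln+1), c k = 0 := by
    have h2 : ∑ k ∈ Finset.Icc (1-N) (Ln+1), c k
        = (∑ k ∈ Finset.Icc (1-N) (Ln+1), (if 2-N ≤ k then a0 (k-1) else 0))
          - ∑ k ∈ Finset.Icc (1-N) (Ln+1), a1 k := by
      rw [← Finset.sum_sub_distrib]
    rw [h2]
    have := hshift (fun _ => 1)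
    simp only [mul_one] at this
    rw [← this, hrep1, hrep0]
    ring
  rw [htail, zero_mul, add_zero, show Ln + 1 - 1 = Ln by ring]

end Diff

section Sym
variable (a0 a1 : ℤ → ℝ) (N Ln : ℤ)

lemma Cc_eq_E (hN : 1 ≤ N) (hLn : 1 - N ≤ Ln)
    (hrep0 : ∑ l ∈ Finset.Icc (1-N) Ln, a0 l = 1)
    (hrep1 : ∑ l ∈ Finset.Icc (1-N) (Ln+1), a1 l = 1)
    (hsym0 : ∀ l : ℤ, 1 - N ≤ l → l ≤ Ln → a0 l = a0 (Ln + 1 - N - l))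
    (hsym1 : ∀ l : ℤ, 1 - N ≤ l → l ≤ Ln + 1 → a1 l = a1 (Ln + 2 - N - l))
    (m : ℤ) (hm1 : 1 - N ≤ m) (hm2 : m ≤ Ln) :
    ∑ k ∈ Finset.Icc (1-N) m, ((if 2-N ≤ k then a0 (k-1) else 0) - a1 k)
      = ∑ k ∈ Finset.Icc (1-N) (Ln+1-N-m), (a1 k - a0 k) := by
  have hsplit : ∑ k ∈ Finset.Icc (1-N) m, ((if 2-N ≤ k then a0 (k-1) else 0) - a1 k)
      = (∑ k ∈ Finset.Icc (1-N) (m-1), a0 k) - ∑ k ∈ Finset.Icc (1-N) m, a1 k := by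
    rw [Finset.sum_sub_distrib]
    congr 1
    rw [sum_Icc_bot _ (1-N) m hm1, if_neg (by omega), zero_add]
    rw [sum_Icc_shift a0 (1-N) (m-1) 1]
    rw [show (1:ℤ) - N + 1 = 2 - N by ring, show m - 1 + 1 = m by ring]
    apply Finset.sum_congr rfl
    intro k hk
    simp only [Finset.mem_Icc] at hk
    rw [if_pos (by omega)]
  rw [hsplit]
  have hP0 : (∑ k ∈ Finset.Icc (1-N) (m-1), a0 k)
      = 1 - ∑ k ∈ Finset.Icc (1-N) (Ln+1-N-m), a0 k := by
    rw [sum_Icc_reflect a0 (1-N) (m-1) (Ln+1-N)]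
    rw [show Ln+1-N - (m-1) = Ln+1-N-m+1 by ring, show Ln+1-N-(1-N) = Ln by ring]
    have hcong : ∑ k ∈ Finset.Icc (Ln+1-N-m+1) Ln, a0 (Ln+1-N-k)
        = ∑ k ∈ Finset.Icc (Ln+1-N-m+1) Ln, a0 k := by
      apply Finset.sum_congr rfl
      intro k hk
      simp only [Finset.mem_Icc] at hk
      exact (hsym0 k (by omega) (by omega)).symm
    rw [hcong]
    have := sum_Icc_split a0 (1-N) Ln (Ln+1-N-m) (by omega) (by omega)
    rw [hrep0] at this
    linarith [this]
  have hP1 : (∑ k ∈ Finset.Icc (1-N) m, a1 k)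
      = 1 - ∑ k ∈ Finset.Icc (1-N) (Ln+1-N-m), a1 k := by
    rw [sum_Icc_reflect a1 (1-N) m (Ln+2-N)]
    rw [show Ln+2-N-(1-N) = Ln+1 by ring]
    have hcong : ∑ k ∈ Finset.Icc (Ln+2-N-m) (Ln+1), a1 (Ln+2-N-k)
        = ∑ k ∈ Finset.Icc (Ln+2-N-m) (Ln+1), a1 k := by
      apply Finset.sum_congr rfl
      intro k hk
      simp only [Finset.mem_Icc] at hk
      exact (hsym1 k (by omega) (by omega)).symm
    rw [hcong]
    have := sum_Icc_split a1 (1-N) (Ln+1) (Ln+1-N-m) (by omega) (by omega)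
    rw [hrep1] at this
    rw [show Ln+1-N-m+1 = Ln+2-N-m by ring] at this
    linarith [this]
  rw [hP0, hP1, Finset.sum_sub_distrib]
  ring

lemma sum_absCc_eq (hN : 1 ≤ N) (hLn : 1 - N ≤ Ln)
    (hrep0 : ∑ l ∈ Finset.Icc (1-N) Ln, a0 l = 1)
    (hrep1 : ∑ l ∈ Finset.Icc (1-N) (Ln+1), a1 l = 1)
    (hsym0 : ∀ l : ℤ, 1 - N ≤ l → l ≤ Ln → a0 l = a0 (Ln + 1 - N - l))
    (hsym1 : ∀ l : ℤ, 1 - N ≤ l → l ≤ Ln + 1 → a1 l = a1 (Ln + 2 - N - l)) :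
    ∑ m ∈ Finset.Icc (1-N) Ln,
        |∑ k ∈ Finset.Icc (1-N) m, ((if 2-N ≤ k then a0 (k-1) else 0) - a1 k)|
      = ∑ l ∈ Finset.Icc (1-N) Ln, |∑ k ∈ Finset.Icc (1-N) l, (a1 k - a0 k)| := by
  have h1 : ∑ m ∈ Finset.Icc (1-N) Ln,
        |∑ k ∈ Finset.Icc (1-N) m, ((if 2-N ≤ k then a0 (k-1) else 0) - a1 k)|
      = ∑ m ∈ Finset.Icc (1-N) Ln,
        |∑ k ∈ Finset.Icc (1-N) (Ln+1-N-m), (a1 k - a0 k)| := by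
    apply Finset.sum_congr rfl
    intro m hm
    simp only [Finset.mem_Icc] at hm
    rw [Cc_eq_E a0 a1 N Ln hN hLn hrep0 hrep1 hsym0 hsym1 m hm.1 hm.2]
  rw [h1]
  rw [sum_Icc_reflect (fun m => |∑ k ∈ Finset.Icc (1-N) (Ln+1-N-m), (a1 k - a0 k)|)
    (1-N) Ln (Ln+1-N)]
  rw [show Ln+1-N-Ln = 1-N by ring, show Ln+1-N-(1-N) = Ln by ring]
  apply Finset.sum_congr rfl
  intro k _
  congr 1
  ring_nf

end Sym


lemma hhalf_two_mul (j : ℤ) : hhalf (2*j) = j := by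
  unfold hhalf; rw [if_pos (by omega)]; omega

lemma hhalf_two_mul_add_one (j : ℤ) : hhalf (2*j+1) = j := by
  unfold hhalf; rw [if_neg (by omega)]; omega

lemma tele_bound (f : ℤ → ℝ) (D : ℝ) (hD : ∀ i : ℤ, |f (i+1) - f i| ≤ D) (j : ℤ) :
    ∀ l : ℤ, |f (j+l) - f j| ≤ |(l:ℝ)| * D := by
  have hD0 : 0 ≤ D := le_trans (abs_nonneg _) (hD 0)
  intro l
  induction l using Int.induction_on with
  | zero => simp
  | succ i ih =>
    have h1 : j + ((i:ℤ)+1) = (j + i) + 1 := by ring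
    have habs : |((i:ℤ):ℝ)| + 1 = |(((i:ℤ)+1 : ℤ):ℝ)| := by
      push_cast
      rw [abs_of_nonneg (by positivity : (0:ℝ) ≤ (i:ℕ)),
        abs_of_nonneg (by positivity : (0:ℝ) ≤ (i:ℕ)+1)]
    calc |f (j+((i:ℤ)+1)) - f j|
        = |(f ((j+i)+1) - f (j+i)) + (f (j+i) - f j)| := by rw [h1]; ring_nf
      _ ≤ |f ((j+i)+1) - f (j+i)| + |f (j+i) - f j| := abs_add_le _ _
      _ ≤ D + |((i:ℤ):ℝ)| * D := add_le_add (hD _) ih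
      _ = (|((i:ℤ):ℝ)| + 1) * D := by ring
      _ = |(((i:ℤ)+1 : ℤ):ℝ)| * D := by rw [habs]
  | pred i ih =>
    have h1 : j + (-(i:ℤ)-1) = (j + (-(i:ℤ))) - 1 := by ring
    have habs : |((-(i:ℤ) : ℤ):ℝ)| + 1 = |((-(i:ℤ)-1 : ℤ):ℝ)| := by
      have hi : (0:ℝ) ≤ (i:ℕ) := Nat.cast_nonneg i
      push_cast
      rw [abs_of_nonpos (by linarith : -((i:ℕ):ℝ) ≤ 0),
        abs_of_nonpos (by linarith : -((i:ℕ):ℝ) - 1 ≤ 0)]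
      ring
    calc |f (j+(-(i:ℤ)-1)) - f j|
        = |(f ((j + (-(i:ℤ))) - 1) - f (j + (-(i:ℤ)))) + (f (j + (-(i:ℤ))) - f j)| := by
          rw [h1]; ring_nf
      _ ≤ |f ((j + (-(i:ℤ))) - 1) - f (j + (-(i:ℤ)))| + |f (j + (-(i:ℤ))) - f j| := abs_add_le _ _
      _ ≤ D + |((-(i:ℤ):ℤ):ℝ)| * D := by
          have h2 := hD ((j + (-(i:ℤ))) - 1)
          rw [show (j + (-(i:ℤ))) - 1 + 1 = j + (-(i:ℤ)) by ring] at h2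
          rw [abs_sub_comm] at h2
          exact add_le_add h2 ih
      _ = (|((-(i:ℤ):ℤ):ℝ)| + 1) * D := by ring
      _ = |((-(i:ℤ)-1 : ℤ):ℝ)| * D := by rw [habs]

section Bounds
variable (a0 a1 : ℤ → ℝ) (N Ln : ℤ)

lemma Sfam_contract (hN : 1 ≤ N) (hLn : 1 - N ≤ Ln)
    (hrep0 : ∑ l ∈ Finset.Icc (1-N) Ln, a0 l = 1)
    (hrep1 : ∑ l ∈ Finset.Icc (1-N) (Ln+1), a1 l = 1)
    (hsym0 : ∀ l : ℤ, 1 - N ≤ l → l ≤ Ln → a0 l = a0 (Ln + 1 - N - l))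
    (hsym1 : ∀ l : ℤ, 1 - N ≤ l → l ≤ Ln + 1 → a1 l = a1 (Ln + 2 - N - l))
    (f : ℤ → ℝ) (D : ℝ) (hD : ∀ j : ℤ, |f (j+1) - f j| ≤ D) (m : ℤ) :
    |Sfam a0 a1 N Ln f (m+1) - Sfam a0 a1 N Ln f m|
      ≤ (∑ l ∈ Finset.Icc (1-N) Ln, |∑ k ∈ Finset.Icc (1-N) l, (a1 k - a0 k)|) * D := by
  have hD0 : 0 ≤ D := le_trans (abs_nonneg _) (hD 0)
  have hbound : ∀ (g : ℤ → ℝ) (j : ℤ),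
      |∑ l ∈ Finset.Icc (1-N) Ln, g l * (f (j+l) - f (j+(l+1)))|
        ≤ (∑ l ∈ Finset.Icc (1-N) Ln, |g l|) * D := by
    intro g j
    calc |∑ l ∈ Finset.Icc (1-N) Ln, g l * (f (j+l) - f (j+(l+1)))|
        ≤ ∑ l ∈ Finset.Icc (1-N) Ln, |g l * (f (j+l) - f (j+(l+1)))| :=
          Finset.abs_sum_le_sum_abs _ _
      _ ≤ ∑ l ∈ Finset.Icc (1-N) Ln, |g l| * D := by
          apply Finset.sum_le_sum
          intro l _
          rw [abs_mul]
          apply mul_le_mul_of_nonneg_left _ (abs_nonneg _)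
          have := hD (j + l)
          rw [show j + (l+1) = (j+l)+1 by ring, abs_sub_comm]
          exact this
      _ = (∑ l ∈ Finset.Icc (1-N) Ln, |g l|) * D := (Finset.sum_mul _ _ _).symm
  rcases Int.even_or_odd m with ⟨j, hj⟩ | ⟨j, hj⟩
  · have hm : m = 2*j := by omega
    subst hm
    rw [diff_oddeven a0 a1 N Ln hN hLn hrep0 hrep1 f j]
    exact hbound _ j
  · have hm : m = 2*j+1 := by omega
    subst hm
    rw [show 2*j+1+1 = 2*j+2 by ring]
    rw [diff_evenodd a0 a1 N Ln hN hLn hrep0 hrep1 f j]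
    rw [← sum_absCc_eq a0 a1 N Ln hN hLn hrep0 hrep1 hsym0 hsym1]
    exact hbound _ j

lemma Sfam_prox (hN : 1 ≤ N) (hLn : 1 - N ≤ Ln)
    (hrep0 : ∑ l ∈ Finset.Icc (1-N) Ln, a0 l = 1)
    (hrep1 : ∑ l ∈ Finset.Icc (1-N) (Ln+1), a1 l = 1)
    (f : ℤ → ℝ) (D : ℝ) (hD : ∀ j : ℤ, |f (j+1) - f j| ≤ D) (m : ℤ) :
    |Sfam a0 a1 N Ln f m - f (hhalf m)|
      ≤ ((∑ l ∈ Finset.Icc (1-N) Ln, |a0 l| * |(l:ℝ)|)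
          + ∑ l ∈ Finset.Icc (1-N) (Ln+1), |a1 l| * |(l:ℝ)|) * D := by
  have hD0 : 0 ≤ D := le_trans (abs_nonneg _) (hD 0)
  set C0 := ∑ l ∈ Finset.Icc (1-N) Ln, |a0 l| * |(l:ℝ)| with hC0
  set C1 := ∑ l ∈ Finset.Icc (1-N) (Ln+1), |a1 l| * |(l:ℝ)| with hC1
  have hC0nn : 0 ≤ C0 := Finset.sum_nonneg fun l _ => by positivity
  have hC1nn : 0 ≤ C1 := Finset.sum_nonneg fun l _ => by positivity
  have key : ∀ (b : ℤ → ℝ) (B : ℤ) (j : ℤ), (∑ l ∈ Finset.Icc (1-N) B, b l = 1) →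
      |(∑ l ∈ Finset.Icc (1-N) B, b l * f (j + l)) - f j|
        ≤ (∑ l ∈ Finset.Icc (1-N) B, |b l| * |(l:ℝ)|) * D := by
    intro b B j hb
    have h1 : (∑ l ∈ Finset.Icc (1-N) B, b l * f (j + l)) - f j
        = ∑ l ∈ Finset.Icc (1-N) B, b l * (f (j + l) - f j) := by
      calc (∑ l ∈ Finset.Icc (1-N) B, b l * f (j + l)) - f j
          = (∑ l ∈ Finset.Icc (1-N) B, b l * f (j + l))
            - (∑ l ∈ Finset.Icc (1-N) B, b l) * f j := by rw [hb, one_mul]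
        _ = (∑ l ∈ Finset.Icc (1-N) B, b l * f (j + l))
            - (∑ l ∈ Finset.Icc (1-N) B, b l * f j) := by rw [Finset.sum_mul]
        _ = ∑ l ∈ Finset.Icc (1-N) B, (b l * f (j + l) - b l * f j) :=
            by rw [Finset.sum_sub_distrib]
        _ = ∑ l ∈ Finset.Icc (1-N) B, b l * (f (j + l) - f j) := by
            apply Finset.sum_congr rfl
            intro l _
            ring
    rw [h1]
    calc |∑ l ∈ Finset.Icc (1-N) B, b l * (f (j + l) - f j)|
        ≤ ∑ l ∈ Finset.Icc (1-N) B, |b l * (f (j + l) - f j)| := Finset.abs_sum_le_sum_abs _ _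
      _ ≤ ∑ l ∈ Finset.Icc (1-N) B, |b l| * (|(l:ℝ)| * D) := by
          apply Finset.sum_le_sum
          intro l _
          rw [abs_mul]
          apply mul_le_mul_of_nonneg_left _ (abs_nonneg _)
          exact tele_bound f D hD j l
      _ = (∑ l ∈ Finset.Icc (1-N) B, |b l| * |(l:ℝ)|) * D := by
          rw [Finset.sum_mul]
          apply Finset.sum_congr rfl
          intro l _
          ring
  rcases Int.even_or_odd m with ⟨j, hj⟩ | ⟨j, hj⟩
  · have hm : m = 2*j := by omega
    subst hm
    rw [Sfam_even, hhalf_two_mul]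
    calc |(∑ l ∈ Finset.Icc (1-N) Ln, a0 l * f (j + l)) - f j| ≤ C0 * D := key a0 Ln j hrep0
    _ ≤ (C0 + C1) * D := by nlinarith
  · have hm : m = 2*j+1 := by omega
    subst hm
    rw [Sfam_odd, hhalf_two_mul_add_one]
    calc |(∑ l ∈ Finset.Icc (1-N) (Ln+1), a1 l * f (j + l)) - f j| ≤ C1 * D :=
        key a1 (Ln+1) j hrep1
    _ ≤ (C0 + C1) * D := by nlinarith

end Bounds



lemma sum_Icc_eq_range' (f : ℤ → ℝ) (a b : ℤ) :
    ∑ k ∈ Finset.Icc a b, f k = ∑ i ∈ Finset.range (b + 1 - a).toNat, f (a + i) := by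
  apply Finset.sum_nbij' (i := fun k => (k - a).toNat) (j := fun i => a + i) <;>
    (intros x hx; simp_all [Finset.mem_Icc, Finset.mem_range]) <;> omega

lemma lip_continuousOn (φ : ℝ → ℝ) (K : ℝ)
    (hlip : ∀ s ∈ Set.Icc (-1:ℝ) 1, ∀ t ∈ Set.Icc (-1:ℝ) 1, |φ t - φ s| ≤ K * |t - s|) :
    ContinuousOn φ (Set.Icc (-1:ℝ) 1) := by
  have hK : 0 ≤ K := by
    by_contra h
    push_neg at h
    have h1 := hlip (-1) (by norm_num) 1 (by norm_num)
    rw [show |(1:ℝ) - -1| = 2 by norm_num] at h1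
    have h2 : (0:ℝ) ≤ |φ 1 - φ (-1)| := abs_nonneg _
    nlinarith
  intro x hx
  rw [Metric.continuousWithinAt_iff]
  intro ε hε
  refine ⟨ε / (K + 1), by positivity, ?_⟩
  intro y hy hyd
  rw [Real.dist_eq] at hyd ⊢
  calc |φ y - φ x| ≤ K * |y - x| := hlip x hx y hy
  _ ≤ K * (ε / (K+1)) := by nlinarith [abs_nonneg (y - x)]
  _ < (K+1) * (ε / (K+1)) := by
      apply mul_lt_mul_of_pos_right (by linarith) (by positivity)
  _ = ε := by field_simp

/-- partition points -/
noncomputable def ptn (n i : ℕ) : ℝ := -1 + i / n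

/-- Riemann sum estimate on `[-1, p/n]` with right endpoints, spacing `1/n`. -/
lemma riemann_est (φ : ℝ → ℝ) (K : ℝ) (hK : 0 ≤ K)
    (hlip : ∀ s ∈ Set.Icc (-1:ℝ) 1, ∀ t ∈ Set.Icc (-1:ℝ) 1, |φ t - φ s| ≤ K * |t - s|)
    (n : ℕ) (hn : 1 ≤ n) (p : ℤ) (hp1 : 1 - (n:ℤ) ≤ p) (hp2 : p ≤ (n:ℤ)) :
    |(∑ k ∈ Finset.Icc (1 - (n:ℤ)) p, φ ((k:ℝ)/n)) / n - ∫ t in (-1:ℝ)..((p:ℝ)/n), φ t|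
      ≤ 2*K/n := by
  have hn0 : (0:ℝ) < n := by exact_mod_cast hn
  have hcont := lip_continuousOn φ K hlip
  have ha : ∀ i : ℕ, ptn n i = -1 + i / n := fun i => rfl
  set q : ℕ := (p + n).toNat with hq
  have hqn : q ≤ 2 * n := by omega
  have hmem : ∀ i : ℕ, i ≤ 2*n → ptn n i ∈ Set.Icc (-1:ℝ) 1 := by
    intro i hi
    rw [ha]
    constructor
    · have : (0:ℝ) ≤ (i:ℝ)/n := by positivity
      linarith
    · have h2 : (i:ℝ) ≤ 2*n := by exact_mod_cast hi
      have h3 : (i:ℝ)/n ≤ 2 := by rw [div_le_iff₀ hn0]; linarith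
      linarith
  have hstep : ∀ i : ℕ, ptn n (i+1) - ptn n i = 1/n := by
    intro i; rw [ha, ha]; push_cast; ring
  have hle : ∀ i : ℕ, ptn n i ≤ ptn n (i+1) := by
    intro i
    apply le_of_sub_nonneg
    rw [hstep i]
    positivity
  have hsub : ∀ i : ℕ, i < q → Set.uIcc (ptn n i) (ptn n (i+1)) ⊆ Set.Icc (-1:ℝ) 1 := by
    intro i hi
    rw [Set.uIcc_of_le (hle i)]
    exact Set.Icc_subset_Icc (hmem i (by omega)).1 (hmem (i+1) (by omega)).2
  have hint : ∀ i : ℕ, i < q → IntervalIntegrable φ volume (ptn n i) (ptn n (i+1)) := by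
    intro i hi
    exact (hcont.mono (hsub i hi)).intervalIntegrable
  have hsum : ∑ k ∈ Finset.Icc (1 - (n:ℤ)) p, φ ((k:ℝ)/n)
      = ∑ i ∈ Finset.range q, φ (ptn n (i+1)) := by
    rw [sum_Icc_eq_range' (fun k => φ ((k:ℝ)/n)) (1-(n:ℤ)) p]
    rw [show (p + 1 - (1 - (n:ℤ))).toNat = q by omega]
    apply Finset.sum_congr rfl
    intro i _
    congr 1
    rw [ha]
    push_cast
    field_simp
    ring
  have hintg : ∫ t in (-1:ℝ)..((p:ℝ)/n), φ t
      = ∑ i ∈ Finset.range q, ∫ t in ptn n i..ptn n (i+1), φ t := by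
    rw [intervalIntegral.sum_integral_adjacent_intervals hint]
    have ha0 : ptn n 0 = -1 := by rw [ha]; norm_num
    have haq : ptn n q = (p:ℝ)/n := by
      rw [ha]
      have h5 : ((p + (n:ℤ)).toNat : ℤ) = p + n := Int.toNat_of_nonneg (by omega)
      have h6 : ((q:ℕ) : ℝ) = (p:ℝ) + n := by
        rw [hq]; exact_mod_cast congrArg (Int.cast : ℤ → ℝ) h5
      rw [h6]
      field_simp
      ring
    rw [ha0, haq]
  have hterm : ∀ i ∈ Finset.range q,
      |φ (ptn n (i+1)) / n - ∫ t in ptn n i..ptn n (i+1), φ t| ≤ K/n^2 := by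
    intro i hi
    rw [Finset.mem_range] at hi
    have hconst : φ (ptn n (i+1)) / n = ∫ _ in ptn n i..ptn n (i+1), φ (ptn n (i+1)) := by
      rw [intervalIntegral.integral_const, smul_eq_mul, hstep i]
      ring
    rw [hconst, ← intervalIntegral.integral_sub intervalIntegrable_const (hint i hi)]
    have hb : ∀ t ∈ Set.uIoc (ptn n i) (ptn n (i+1)), ‖φ (ptn n (i+1)) - φ t‖ ≤ K * (1/n) := by
      intro t ht
      rw [Set.uIoc_of_le (hle i)] at ht
      have ht' : t ∈ Set.Icc (-1:ℝ) 1 := (hsub i hi) (Set.mem_uIcc.2 (Or.inl ⟨le_of_lt ht.1, ht.2⟩))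
      rw [Real.norm_eq_abs]
      calc |φ (ptn n (i+1)) - φ t| ≤ K * |ptn n (i+1) - t| := hlip t ht' (ptn n (i+1)) (hmem (i+1) (by omega))
      _ ≤ K * (1/n) := by
          apply mul_le_mul_of_nonneg_left _ hK
          have h7 := hstep i
          have h8 : ptn n i < t := ht.1
          have h9 : t ≤ ptn n (i+1) := ht.2
          rw [abs_of_nonneg (by linarith : (0:ℝ) ≤ ptn n (i+1) - t)]
          linarith
    have hnn := intervalIntegral.norm_integral_le_of_norm_le_const hb
    rw [Real.norm_eq_abs] at hnn
    calc |∫ t in ptn n i..ptn n (i+1), (φ (ptn n (i+1)) - φ t)| ≤ K * (1/n) * |ptn n (i+1) - ptn n i| := hnn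
    _ = K * (1/n) * (1/n) := by
        rw [show ptn n (i+1) - ptn n i = 1/n from hstep i, abs_of_nonneg (by positivity : (0:ℝ) ≤ 1/(n:ℝ))]
    _ = K / n^2 := by rw [pow_two]; ring
  calc |(∑ k ∈ Finset.Icc (1 - (n:ℤ)) p, φ ((k:ℝ)/n)) / n - ∫ t in (-1:ℝ)..((p:ℝ)/n), φ t|
      = |∑ i ∈ Finset.range q, (φ (ptn n (i+1)) / n - ∫ t in ptn n i..ptn n (i+1), φ t)| := by
        rw [hsum, hintg, Finset.sum_sub_distrib, Finset.sum_div]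
    _ ≤ ∑ i ∈ Finset.range q, |φ (ptn n (i+1)) / n - ∫ t in ptn n i..ptn n (i+1), φ t| :=
        Finset.abs_sum_le_sum_abs _ _
    _ ≤ ∑ _i ∈ Finset.range q, K/n^2 := Finset.sum_le_sum hterm
    _ = q * (K/n^2) := by rw [Finset.sum_const, Finset.card_range]; ring
    _ ≤ (2*n) * (K/n^2) := by
        apply mul_le_mul_of_nonneg_right _ (by positivity)
        exact_mod_cast hqn
    _ = 2*K/n := by field_simp

lemma sigma_le (r : ℝ → ℝ) (K Kr : ℝ) (hK : 0 ≤ K) (hKr : 0 ≤ Kr)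
    (hlipr : ∀ s ∈ Set.Icc (-1:ℝ) 1, ∀ t ∈ Set.Icc (-1:ℝ) 1, |r t - r s| ≤ K * |t - s|)
    (hlipR : ∀ s ∈ Set.Icc (-1:ℝ) 1, ∀ t ∈ Set.Icc (-1:ℝ) 1,
      |(fun w => |∫ u in (-1:ℝ)..w, r u|) t - (fun w => |∫ u in (-1:ℝ)..w, r u|) s| ≤ Kr * |t - s|)
    (n : ℕ) (hn : 1 ≤ n) (Ln : ℤ) (hLn1 : 1 - (n:ℤ) ≤ Ln) (hLn2 : Ln ≤ (n:ℤ))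
    (a0 a1 : ℤ → ℝ) (Δ : ℝ) (hΔ : 0 ≤ Δ)
    (hδ : ∀ k : ℤ, 1 - (n:ℤ) ≤ k → k ≤ Ln → |a0 k - a1 k - r ((k:ℝ)/n) / (n:ℝ)^2| ≤ Δ) :
    ∑ l ∈ Finset.Icc (1-(n:ℤ)) Ln, |∑ k ∈ Finset.Icc (1-(n:ℤ)) l, (a1 k - a0 k)|
      ≤ (∫ t in (-1:ℝ)..1, |∫ u in (-1:ℝ)..t, r u|)
        + 2*Kr/n + 2*(n:ℝ)*(2*K/(n:ℝ)^2 + 2*(n:ℝ)*Δ) := by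
  have hn0 : (0:ℝ) < n := by exact_mod_cast hn
  set R : ℝ → ℝ := fun t => ∫ u in (-1:ℝ)..t, r u with hR
  -- pointwise bound on |E l|
  have hEl : ∀ l : ℤ, 1 - (n:ℤ) ≤ l → l ≤ Ln →
      |∑ k ∈ Finset.Icc (1-(n:ℤ)) l, (a1 k - a0 k)|
        ≤ |R ((l:ℝ)/n)| / n + (2*K/(n:ℝ)^2 + 2*(n:ℝ)*Δ) := by
    intro l hl1 hl2
    have hdecomp : ∑ k ∈ Finset.Icc (1-(n:ℤ)) l, (a1 k - a0 k)
        = -((∑ k ∈ Finset.Icc (1-(n:ℤ)) l, r ((k:ℝ)/n)) / (n:ℝ)^2)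
          - ∑ k ∈ Finset.Icc (1-(n:ℤ)) l, (a0 k - a1 k - r ((k:ℝ)/n) / (n:ℝ)^2) := by
      rw [Finset.sum_div, ← Finset.sum_neg_distrib, ← Finset.sum_sub_distrib]
      apply Finset.sum_congr rfl
      intro k _
      ring
    rw [hdecomp]
    have h1 : |(∑ k ∈ Finset.Icc (1-(n:ℤ)) l, r ((k:ℝ)/n)) / (n:ℝ)^2|
        ≤ |R ((l:ℝ)/n)| / n + 2*K/(n:ℝ)^2 := by
      have hre := riemann_est r K hK hlipr n hn l hl1 (le_trans hl2 hLn2)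
      set S := ∑ k ∈ Finset.Icc (1-(n:ℤ)) l, r ((k:ℝ)/n) with hS
      have h2 : |S / n| ≤ |R ((l:ℝ)/n)| + 2*K/n := by
        calc |S / n| = |(S / n - R ((l:ℝ)/n)) + R ((l:ℝ)/n)| := by ring_nf
        _ ≤ |S / n - R ((l:ℝ)/n)| + |R ((l:ℝ)/n)| := abs_add_le _ _
        _ ≤ 2*K/n + |R ((l:ℝ)/n)| := add_le_add hre le_rfl
        _ = |R ((l:ℝ)/n)| + 2*K/n := by ring
      have h3 : |S / (n:ℝ)^2| = |S / n| / n := by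
        rw [abs_div, abs_div, abs_of_pos hn0, abs_of_pos (by positivity : (0:ℝ) < (n:ℝ)^2)]
        rw [pow_two]
        field_simp
      rw [h3]
      calc |S / n| / n ≤ (|R ((l:ℝ)/n)| + 2*K/n) / n := by
            gcongr
      _ = |R ((l:ℝ)/n)| / n + 2*K/(n:ℝ)^2 := by rw [pow_two]; field_simp
    have h4 : |∑ k ∈ Finset.Icc (1-(n:ℤ)) l, (a0 k - a1 k - r ((k:ℝ)/n) / (n:ℝ)^2)|
        ≤ 2*(n:ℝ)*Δ := by
      calc |∑ k ∈ Finset.Icc (1-(n:ℤ)) l, (a0 k - a1 k - r ((k:ℝ)/n) / (n:ℝ)^2)|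
          ≤ ∑ k ∈ Finset.Icc (1-(n:ℤ)) l, |a0 k - a1 k - r ((k:ℝ)/n) / (n:ℝ)^2| :=
            Finset.abs_sum_le_sum_abs _ _
        _ ≤ ∑ _k ∈ Finset.Icc (1-(n:ℤ)) l, Δ := by
            apply Finset.sum_le_sum
            intro k hk
            rw [Finset.mem_Icc] at hk
            exact hδ k hk.1 (le_trans hk.2 hl2)
        _ = ((Finset.Icc (1-(n:ℤ)) l).card : ℝ) * Δ := by rw [Finset.sum_const, nsmul_eq_mul]
        _ ≤ 2*(n:ℝ)*Δ := by
            apply mul_le_mul_of_nonneg_right _ hΔ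
            have hcard : (Finset.Icc (1-(n:ℤ)) l).card = (l + 1 - (1 - (n:ℤ))).toNat :=
              Int.card_Icc _ _
            have : (Finset.Icc (1-(n:ℤ)) l).card ≤ 2*n := by
              rw [hcard]; omega
            calc ((Finset.Icc (1-(n:ℤ)) l).card : ℝ) ≤ ((2*n : ℕ) : ℝ) := by exact_mod_cast this
            _ = 2*(n:ℝ) := by push_cast; ring
    calc |-((∑ k ∈ Finset.Icc (1-(n:ℤ)) l, r ((k:ℝ)/n)) / (n:ℝ)^2)
            - ∑ k ∈ Finset.Icc (1-(n:ℤ)) l, (a0 k - a1 k - r ((k:ℝ)/n) / (n:ℝ)^2)|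
        ≤ |(∑ k ∈ Finset.Icc (1-(n:ℤ)) l, r ((k:ℝ)/n)) / (n:ℝ)^2|
          + |∑ k ∈ Finset.Icc (1-(n:ℤ)) l, (a0 k - a1 k - r ((k:ℝ)/n) / (n:ℝ)^2)| := by
          rw [show -((∑ k ∈ Finset.Icc (1-(n:ℤ)) l, r ((k:ℝ)/n)) / (n:ℝ)^2)
            - ∑ k ∈ Finset.Icc (1-(n:ℤ)) l, (a0 k - a1 k - r ((k:ℝ)/n) / (n:ℝ)^2)
            = -(((∑ k ∈ Finset.Icc (1-(n:ℤ)) l, r ((k:ℝ)/n)) / (n:ℝ)^2)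
              + ∑ k ∈ Finset.Icc (1-(n:ℤ)) l, (a0 k - a1 k - r ((k:ℝ)/n) / (n:ℝ)^2)) by ring,
            abs_neg]
          exact abs_add_le _ _
      _ ≤ (|R ((l:ℝ)/n)| / n + 2*K/(n:ℝ)^2) + 2*(n:ℝ)*Δ := add_le_add h1 h4
      _ = |R ((l:ℝ)/n)| / n + (2*K/(n:ℝ)^2 + 2*(n:ℝ)*Δ) := by ring
  -- outer estimate
  have hcontR := lip_continuousOn (fun w => |R w|) Kr hlipR
  have hc1 : ((Ln:ℝ))/n ≤ 1 := by
    rw [div_le_one hn0]; exact_mod_cast hLn2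
  have hc2 : (-1:ℝ) ≤ (Ln:ℝ)/n := by
    rw [le_div_iff₀ hn0]
    have : (-(n:ℤ) : ℝ) ≤ ((Ln:ℤ) : ℝ) := by exact_mod_cast (by omega : -(n:ℤ) ≤ Ln)
    push_cast at this ⊢
    linarith
  have hint1 : IntervalIntegrable (fun w => |R w|) volume (-1) ((Ln:ℝ)/n) := by
    apply (hcontR.mono _).intervalIntegrable
    rw [Set.uIcc_of_le hc2]
    exact Set.Icc_subset_Icc le_rfl hc1
  have hint2 : IntervalIntegrable (fun w => |R w|) volume ((Ln:ℝ)/n) 1 := by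
    apply (hcontR.mono _).intervalIntegrable
    rw [Set.uIcc_of_le hc1]
    exact Set.Icc_subset_Icc hc2 le_rfl
  have hIle : (∫ t in (-1:ℝ)..((Ln:ℝ)/n), |R t|) ≤ ∫ t in (-1:ℝ)..1, |R t| := by
    have hadd := integral_add_adjacent_intervals hint1 hint2
    have hpos : (0:ℝ) ≤ ∫ t in ((Ln:ℝ)/n)..1, |R t| :=
      intervalIntegral.integral_nonneg hc1 (fun u _ => abs_nonneg _)
    linarith
  have hre := riemann_est (fun w => |R w|) Kr hKr hlipR n hn Ln hLn1 hLn2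
  have h5 : (∑ l ∈ Finset.Icc (1-(n:ℤ)) Ln, |R ((l:ℝ)/n)|) / n
      ≤ (∫ t in (-1:ℝ)..1, |R t|) + 2*Kr/n := by
    have h7 : (∑ l ∈ Finset.Icc (1-(n:ℤ)) Ln, |R ((l:ℝ)/n)|) / n
        - (∫ t in (-1:ℝ)..((Ln:ℝ)/n), |R t|) ≤ 2*Kr/n := le_trans (le_abs_self _) hre
    linarith
  have hcard : ((Finset.Icc (1-(n:ℤ)) Ln).card : ℝ) ≤ 2*(n:ℝ) := by
    have : (Finset.Icc (1-(n:ℤ)) Ln).card = (Ln + 1 - (1 - (n:ℤ))).toNat := Int.card_Icc _ _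
    have h8 : (Finset.Icc (1-(n:ℤ)) Ln).card ≤ 2*n := by rw [this]; omega
    calc ((Finset.Icc (1-(n:ℤ)) Ln).card : ℝ) ≤ ((2*n : ℕ) : ℝ) := by exact_mod_cast h8
    _ = 2*(n:ℝ) := by push_cast; ring
  calc ∑ l ∈ Finset.Icc (1-(n:ℤ)) Ln, |∑ k ∈ Finset.Icc (1-(n:ℤ)) l, (a1 k - a0 k)|
      ≤ ∑ l ∈ Finset.Icc (1-(n:ℤ)) Ln,
          (|R ((l:ℝ)/n)| / n + (2*K/(n:ℝ)^2 + 2*(n:ℝ)*Δ)) := by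
        apply Finset.sum_le_sum
        intro l hl
        rw [Finset.mem_Icc] at hl
        exact hEl l hl.1 hl.2
    _ = (∑ l ∈ Finset.Icc (1-(n:ℤ)) Ln, |R ((l:ℝ)/n)|) / n
        + ((Finset.Icc (1-(n:ℤ)) Ln).card : ℝ) * (2*K/(n:ℝ)^2 + 2*(n:ℝ)*Δ) := by
        rw [Finset.sum_add_distrib, Finset.sum_const, nsmul_eq_mul, Finset.sum_div]
    _ ≤ ((∫ t in (-1:ℝ)..1, |R t|) + 2*Kr/n)
        + (2*(n:ℝ)) * (2*K/(n:ℝ)^2 + 2*(n:ℝ)*Δ) := by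
        apply add_le_add h5
        apply mul_le_mul_of_nonneg_right hcard (by positivity)
    _ = (∫ t in (-1:ℝ)..1, |R t|) + 2*Kr/n + 2*(n:ℝ)*(2*K/(n:ℝ)^2 + 2*(n:ℝ)*Δ) := by ring

end Helpers

open Filter MeasureTheory intervalIntegral in
/-- for a family of odd-symmetric subdivision schemes `S_{a^n}`
reproducing `Π₀` (with `L_n = n−1` for all `n` or `L_n = n` for all `n`), a `C¹`
function `r : [−1,1] → ℝ` with `R(t) = ∫_{−1}^t r`, if
`a^{n,0}_j − a^{n,1}_j = r(j/n) n^{−2} + ε^n_j` with `|ε^n_j| ≤ μ n^{−α}` (`α > 2`,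
`μ > 0`) and `∫_{−1}^1 |R| < 1`, then there is `n₀ ∈ ℕ` such that `S_{a^n}` is
uniformly convergent for every `n > n₀`. -/
theorem stmt18
    (a0 a1 : ℕ → ℤ → ℝ) (L : ℕ → ℤ)
    (hL : (∀ n : ℕ, L n = (n : ℤ) - 1) ∨ (∀ n : ℕ, L n = (n : ℤ)))
    (hrep : ∀ n : ℕ, 1 ≤ n →
      (∑ l ∈ Finset.Icc (1 - (n : ℤ)) (L n), a0 n l) = 1 ∧
      (∑ l ∈ Finset.Icc (1 - (n : ℤ)) (L n + 1), a1 n l) = 1)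
    (hsym0 : ∀ n : ℕ, 1 ≤ n → ∀ l : ℤ, 1 - (n : ℤ) ≤ l → l ≤ L n →
      a0 n l = a0 n (L n + 1 - (n : ℤ) - l))
    (hsym1 : ∀ n : ℕ, 1 ≤ n → ∀ l : ℤ, 1 - (n : ℤ) ≤ l → l ≤ L n + 1 →
      a1 n l = a1 n (L n + 2 - (n : ℤ) - l))
    (r r' : ℝ → ℝ)
    (hr' : ∀ t ∈ Set.Icc (-1 : ℝ) 1, HasDerivWithinAt r (r' t) (Set.Icc (-1 : ℝ) 1) t)
    (hr'c : ContinuousOn r' (Set.Icc (-1 : ℝ) 1))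
    (α μ : ℝ) (hα : 2 < α) (hμ : 0 < μ)
    (herr : ∀ n : ℕ, 1 ≤ n → ∀ j : ℤ, 1 - (n : ℤ) ≤ j → j ≤ L n →
      |a0 n j - a1 n j - r ((j : ℝ) / n) / (n : ℝ) ^ 2| ≤ μ / (n : ℝ) ^ α)
    (hRlt : (∫ t in (-1 : ℝ)..1, |∫ s in (-1 : ℝ)..t, r s|) < 1) :
    ∃ n₀ : ℕ, ∀ n : ℕ, n₀ < n →
      UnifConvergent (Sfam (a0 n) (a1 n) n (L n)) := by
  have rcont : ContinuousOn r (Set.Icc (-1:ℝ) 1) := fun t ht => (hr' t ht).continuousWithinAt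
  obtain ⟨K₀, hK₀⟩ := isCompact_Icc.exists_bound_of_continuousOn hr'c
  set K : ℝ := max K₀ 0 with hKdef
  have hK : 0 ≤ K := le_max_right _ _
  have hlipr : ∀ s ∈ Set.Icc (-1:ℝ) 1, ∀ t ∈ Set.Icc (-1:ℝ) 1, |r t - r s| ≤ K * |t - s| := by
    intro s hs t ht
    have hKb : ∀ x ∈ Set.Icc (-1:ℝ) 1, ‖r' x‖ ≤ K :=
      fun x hx => le_trans (hK₀ x hx) (le_max_left _ _)
    have := Convex.norm_image_sub_le_of_norm_hasDerivWithin_le hr' hKb (convex_Icc _ _) hs ht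
    simpa [Real.norm_eq_abs] using this
  obtain ⟨K₁, hK₁⟩ := isCompact_Icc.exists_bound_of_continuousOn rcont
  set Kr : ℝ := max K₁ 0 with hKrdef
  have hKr : 0 ≤ Kr := le_max_right _ _
  have hKrb : ∀ x ∈ Set.Icc (-1:ℝ) 1, |r x| ≤ Kr := fun x hx =>
    le_trans (by simpa [Real.norm_eq_abs] using hK₁ x hx) (le_max_left _ _)
  have hrint : ∀ u ∈ Set.Icc (-1:ℝ) 1, ∀ v ∈ Set.Icc (-1:ℝ) 1,
      IntervalIntegrable r volume u v := by
    intro u hu v hv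
    exact (rcont.mono (Set.uIcc_subset_Icc hu hv)).intervalIntegrable
  have hlipR : ∀ s ∈ Set.Icc (-1:ℝ) 1, ∀ t ∈ Set.Icc (-1:ℝ) 1,
      |(fun w => |∫ u in (-1:ℝ)..w, r u|) t - (fun w => |∫ u in (-1:ℝ)..w, r u|) s|
        ≤ Kr * |t - s| := by
    intro s hs t ht
    simp only []
    have hsub : (∫ u in (-1:ℝ)..t, r u) - (∫ u in (-1:ℝ)..s, r u) = ∫ u in s..t, r u :=
      intervalIntegral.integral_interval_sub_left (hrint (-1) (by norm_num) t ht)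
        (hrint (-1) (by norm_num) s hs)
    calc |(|∫ u in (-1:ℝ)..t, r u|) - (|∫ u in (-1:ℝ)..s, r u|)|
        ≤ |(∫ u in (-1:ℝ)..t, r u) - (∫ u in (-1:ℝ)..s, r u)| := abs_abs_sub_abs_le_abs_sub _ _
      _ = |∫ u in s..t, r u| := by rw [hsub]
      _ ≤ Kr * |t - s| := by
          have hb : ∀ x ∈ Set.uIoc s t, ‖r x‖ ≤ Kr := by
            intro x hx
            rw [Real.norm_eq_abs]
            exact hKrb x ((Set.uIcc_subset_Icc hs ht) (Set.Ioc_subset_Icc_self hx))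
          have := intervalIntegral.norm_integral_le_of_norm_le_const hb
          rwa [Real.norm_eq_abs] at this
  set A := ∫ t in (-1:ℝ)..1, |∫ s in (-1:ℝ)..t, r s| with hAdef
  have hA0 : 0 ≤ A := intervalIntegral.integral_nonneg (by norm_num) (fun u _ => abs_nonneg _)
  have hA1 : A < 1 := hRlt
  have h4pos : 0 < (1 - A)/4 := by linarith
  have hev1 : ∀ᶠ (n:ℕ) in atTop, (2*Kr+4*K)/(n:ℝ) ≤ (1-A)/4 :=
    (tendsto_const_div_atTop_nhds_zero_nat (2*Kr+4*K)).eventually (ge_mem_nhds h4pos)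
  have hev2 : ∀ᶠ (n:ℕ) in atTop, 4*μ*(n:ℝ)^((2:ℝ)-α) ≤ (1-A)/4 := by
    have ht1 : Tendsto (fun x:ℝ => x ^ (-(α-2))) atTop (nhds 0) :=
      tendsto_rpow_neg_atTop (by linarith)
    have ht2 : Tendsto (fun n:ℕ => ((n:ℝ)) ^ ((2:ℝ)-α)) atTop (nhds 0) := by
      rw [show (2:ℝ) - α = -(α-2) by ring]
      exact ht1.comp (tendsto_natCast_atTop_atTop (R := ℝ))
    have ht3 : Tendsto (fun n:ℕ => 4*μ*((n:ℝ) ^ ((2:ℝ)-α))) atTop (nhds 0) := by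
      simpa using ht2.const_mul (4*μ)
    exact ht3.eventually (ge_mem_nhds h4pos)
  obtain ⟨n₁, hn₁⟩ := Filter.eventually_atTop.1 (hev1.and hev2)
  refine ⟨max n₁ 1, ?_⟩
  intro n hn
  have hn1 : 1 ≤ n := le_trans (le_max_right n₁ 1) (le_of_lt hn)
  have hnn : (0:ℝ) < n := by exact_mod_cast hn1
  obtain ⟨hb1, hb2⟩ := hn₁ n (le_trans (le_max_left n₁ 1) (le_of_lt hn))
  have hNn : (1:ℤ) ≤ (n:ℤ) := by exact_mod_cast hn1
  have hLn1 : 1 - (n:ℤ) ≤ L n := by rcases hL with h | h <;> rw [h n] <;> omega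
  have hLn2 : L n ≤ (n:ℤ) := by rcases hL with h | h <;> rw [h n] <;> omega
  obtain ⟨hrep0, hrep1⟩ := hrep n hn1
  have hsym0' := hsym0 n hn1
  have hsym1' := hsym1 n hn1
  have hαpos : (0:ℝ) < (n:ℝ)^α := Real.rpow_pos_of_pos hnn α
  have hΔpos : (0:ℝ) ≤ μ/(n:ℝ)^α := le_of_lt (div_pos hμ hαpos)
  have hσ1 := sigma_le r K Kr hK hKr hlipr hlipR n hn1 (L n) hLn1 hLn2 (a0 n) (a1 n)
    (μ/(n:ℝ)^α) hΔpos (fun k hk1 hk2 => herr n hn1 k hk1 hk2)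
  have hpow : (n:ℝ)^((2:ℝ)-α) = (n:ℝ)^2 / (n:ℝ)^α := by
    rw [Real.rpow_sub hnn]
    congr 1
    rw [show ((2:ℝ)) = ((2:ℕ):ℝ) by norm_num, Real.rpow_natCast]
  have herr2 : 2*Kr/(n:ℝ) + 2*(n:ℝ)*(2*K/(n:ℝ)^2 + 2*(n:ℝ)*(μ/(n:ℝ)^α)) ≤ (1-A)/2 := by
    have hx : 2*(n:ℝ)*(2*K/(n:ℝ)^2 + 2*(n:ℝ)*(μ/(n:ℝ)^α))
        = 4*K/(n:ℝ) + 4*μ*((n:ℝ)^2/(n:ℝ)^α) := by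
      field_simp
      ring
    rw [hx, ← hpow]
    have hy : 2*Kr/(n:ℝ) + 4*K/(n:ℝ) = (2*Kr + 4*K)/(n:ℝ) := by ring
    linarith
  have hσγ : (∑ l ∈ Finset.Icc (1-(n:ℤ)) (L n),
      |∑ k ∈ Finset.Icc (1-(n:ℤ)) l, (a1 n k - a0 n k)|) ≤ (1+A)/2 := by
    linarith
  have hC0nn : (0:ℝ) ≤ ∑ l ∈ Finset.Icc (1-(n:ℤ)) (L n), |a0 n l| * |(l:ℝ)| :=
    Finset.sum_nonneg fun l _ => by positivity
  have hC1nn : (0:ℝ) ≤ ∑ l ∈ Finset.Icc (1-(n:ℤ)) (L n + 1), |a1 n l| * |(l:ℝ)| :=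
    Finset.sum_nonneg fun l _ => by positivity
  apply abstract_conv _ ((1+A)/2)
    ((∑ l ∈ Finset.Icc (1-(n:ℤ)) (L n), |a0 n l| * |(l:ℝ)|)
      + ∑ l ∈ Finset.Icc (1-(n:ℤ)) (L n + 1), |a1 n l| * |(l:ℝ)|)
    (by linarith) (by linarith) (by linarith)
  · intro f D hD m
    have hD0 : 0 ≤ D := le_trans (abs_nonneg _) (hD 0)
    calc |Sfam (a0 n) (a1 n) (n:ℤ) (L n) f (m+1) - Sfam (a0 n) (a1 n) (n:ℤ) (L n) f m|
        ≤ (∑ l ∈ Finset.Icc (1-(n:ℤ)) (L n),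
            |∑ k ∈ Finset.Icc (1-(n:ℤ)) l, (a1 n k - a0 n k)|) * D :=
          Sfam_contract (a0 n) (a1 n) (n:ℤ) (L n) hNn hLn1 hrep0 hrep1 hsym0' hsym1' f D hD m
      _ ≤ (1+A)/2 * D := mul_le_mul_of_nonneg_right hσγ hD0
  · intro f D hD m
    exact Sfam_prox (a0 n) (a1 n) (n:ℤ) (L n) hNn hLn1 hrep0 hrep1 f D hD m
end
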